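/- arXiv:2202.06561 — 5 statements merged into one kernel-verified Lean document; each statement's English description precedes it below -/
import Mathlib

section
/- The unique decreasingly minimal element m_ℝ of an integral base-polyhedron B can be represented as a convex combination of the decreasingly minimal elements of the associated M-convex set B ∩ ℤ^S. -/
open Finset

variable {α : Type*} [Fintype α] [DecidableEq α]

def Supermodular (p : Finset α → EReal) : Prop :=
  ∀ X Y : Finset α, p X + p Y ≤ p (X ∩ Y) + p (X ∪ Y)

/-- `p` takes values in `ℤ ∪ {−∞}`. -/
def IntegerValued (p : Finset α → EReal) : Prop :=
  ∀ X : Finset α, p X = ⊥ ∨ ∃ n : ℤ, p X = ((n : ℝ) : EReal)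

/-- `x` belongs to the base-polyhedron `B'(p)`:
`x(S) = p(S)` and `x(Z) ≥ p(Z)` for every `Z ⊆ S`. -/
def memB (p : Finset α → EReal) (x : α → ℝ) : Prop :=
  ((∑ s, x s : ℝ) : EReal) = p Finset.univ ∧
    ∀ Z : Finset α, p Z ≤ ((∑ s ∈ Z, x s : ℝ) : EReal)

/-- `x` is an integral element of the base-polyhedron `B'(p)` (a member of the
M-convex set `B ∩ ℤ^S`). -/
def memBZ (p : Finset α → EReal) (x : α → ℤ) : Prop :=
  ((((∑ s, x s : ℤ) : ℝ)) : EReal) = p Finset.univ ∧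
    ∀ Z : Finset α, p Z ≤ ((((∑ s ∈ Z, x s : ℤ) : ℝ)) : EReal)

/-- Lexicographic comparison `l1 ≤_lex l2` of lists. -/
def lexLE {β : Type*} [LT β] (l1 l2 : List β) : Prop :=
  l1 = l2 ∨ List.Lex (· < ·) l1 l2

/-- The components of `x` sorted in decreasing order. -/
noncomputable def sortDescR (x : α → ℝ) : List ℝ :=
  (Multiset.sort (Finset.univ.val.map x) (· ≤ ·)).reverse

/-- The components of the integral vector `x` sorted in decreasing order. -/
def sortDescZ (x : α → ℤ) : List ℤ :=
  (Multiset.sort (Finset.univ.val.map x) (· ≤ ·)).reverse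

/-- `m` is a decreasingly minimal element of the base-polyhedron `B'(p)`. -/
def DecMinR (p : Finset α → EReal) (m : α → ℝ) : Prop :=
  memB p m ∧ ∀ y : α → ℝ, memB p y → lexLE (sortDescR m) (sortDescR y)

/-- `m` is a decreasingly minimal element of the M-convex set `B'(p) ∩ ℤ^S`. -/
def DecMinZ (p : Finset α → EReal) (m : α → ℤ) : Prop :=
  memBZ p m ∧ ∀ y : α → ℤ, memBZ p y → lexLE (sortDescZ m) (sortDescZ y)

/-! ### Auxiliary development -/

open scoped Classical
set_option linter.unusedSectionVars false
set_option linter.unusedVariables false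
set_option maxHeartbeats 1000000

namespace DecMinAux

/-! #### Lex order generalities -/

theorem lexTrichotomy {β : Type*} [LinearOrder β] :
    ∀ (l1 l2 : List β), l1 = l2 ∨ List.Lex (· < ·) l1 l2 ∨ List.Lex (· < ·) l2 l1 := by
  intro l1
  induction l1 with
  | nil => intro l2; cases l2 with
    | nil => exact Or.inl rfl
    | cons b t => exact Or.inr (Or.inl List.Lex.nil)
  | cons a t ih =>
    intro l2
    cases l2 with
    | nil => exact Or.inr (Or.inr List.Lex.nil)
    | cons b t2 =>
      rcases lt_trichotomy a b with h|h|h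
      · exact Or.inr (Or.inl (List.Lex.rel h))
      · subst h
        rcases ih t2 with h|h|h
        · exact Or.inl (by rw [h])
        · exact Or.inr (Or.inl (List.Lex.cons h))
        · exact Or.inr (Or.inr (List.Lex.cons h))
      · exact Or.inr (Or.inr (List.Lex.rel h))

theorem lexAsymm {β : Type*} [LinearOrder β] :
    ∀ (l1 l2 : List β), List.Lex (· < ·) l1 l2 → List.Lex (· < ·) l2 l1 → False := by
  intro l1 l2 h
  induction h with
  | nil => intro h2; cases h2
  | @rel a l1' b l2' hab =>
    intro h2
    cases h2 with
    | rel hba => exact absurd hba (not_lt.mpr hab.le)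
    | cons h => exact absurd hab (lt_irrefl _)
  | @cons a l1' l2' h ih =>
    intro h2
    cases h2 with
    | rel hba => exact absurd hba (lt_irrefl _)
    | cons h' => exact ih h'

theorem lexIrrefl {β : Type*} [LinearOrder β] (l : List β) : ¬ List.Lex (· < ·) l l :=
  fun h => lexAsymm l l h h

/-! #### Descending sort of a multiset -/

noncomputable def sortDesc {β : Type*} [LinearOrder β] (M : Multiset β) : List β :=
  (Multiset.sort M (· ≤ ·)).reverse

variable {β : Type*} [LinearOrder β]

theorem sortDesc_coe (M : Multiset β) : (sortDesc M : Multiset β) = M := by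
  unfold sortDesc
  rw [← Multiset.coe_reverse]
  simp [Multiset.sort_eq]

theorem sortDesc_sorted (M : Multiset β) : (sortDesc M).Pairwise (· ≥ ·) := by
  unfold sortDesc
  rw [List.pairwise_reverse]
  exact Multiset.pairwise_sort M (· ≤ ·)

instance : IsAntisymm β (· ≥ ·) := ⟨fun _ _ h h' => le_antisymm h' h⟩

theorem sortDesc_eq_of_sorted {M : Multiset β} {l : List β} (hl : l.Pairwise (· ≥ ·))
    (hlM : (l : Multiset β) = M) : sortDesc M = l := by
  apply List.Perm.eq_of_pairwise' (sortDesc_sorted M) hl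
  rw [← Multiset.coe_eq_coe, sortDesc_coe, hlM]

theorem sortDesc_cons_max {M : Multiset β} {v : β} (hv : v ∈ M) (hmax : ∀ w ∈ M, w ≤ v) :
    sortDesc M = v :: sortDesc (M.erase v) := by
  apply sortDesc_eq_of_sorted
  · rw [List.pairwise_cons]
    refine ⟨fun b hb => ?_, sortDesc_sorted _⟩
    have : b ∈ (M.erase v) := by
      rw [← sortDesc_coe (M.erase v)]; exact_mod_cast hb
    exact hmax b (Multiset.mem_of_mem_erase this)
  · show (v ::ₘ (sortDesc (M.erase v) : Multiset β)) = M
    rw [sortDesc_coe, Multiset.cons_erase hv]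

theorem sortDesc_length (M : Multiset β) : (sortDesc M).length = Multiset.card M := by
  unfold sortDesc
  rw [List.length_reverse, Multiset.length_sort]

theorem multiset_exists_max (M : Multiset β) (h : M ≠ 0) : ∃ v ∈ M, ∀ w ∈ M, w ≤ v := by
  have hne : M.toFinset.Nonempty := by
    obtain ⟨a, ha⟩ := Multiset.exists_mem_of_ne_zero h
    exact ⟨a, Multiset.mem_toFinset.mpr ha⟩
  refine ⟨M.toFinset.max' hne, Multiset.mem_toFinset.mp (M.toFinset.max'_mem hne), ?_⟩
  intro w hw
  exact Finset.le_max' _ _ (Multiset.mem_toFinset.mpr hw)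

theorem lex_of_count : ∀ (n : ℕ) (M N : Multiset β), Multiset.card M = n → Multiset.card N = n →
    ∀ v : β, N.count v < M.count v → (∀ w, v < w → N.count w = M.count w) →
    List.Lex (· < ·) (sortDesc N) (sortDesc M) := by
  intro n
  induction n with
  | zero =>
    intro M N hM hN v hv _
    rw [Multiset.card_eq_zero] at hM
    subst hM; simp at hv
  | succ n ih =>
    intro M N hM hN v hv habove
    have hM0 : M ≠ 0 := by
      intro h; subst h; simp at hM
    obtain ⟨a, haM, hamax⟩ := multiset_exists_max M hM0
    have hvM : v ∈ M := Multiset.count_pos.mp (lt_of_le_of_lt (Nat.zero_le _) hv)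
    have hva : v ≤ a := hamax v hvM
    rcases lt_or_eq_of_le hva with hlt | heq
    · have hca : N.count a = M.count a := habove a hlt
      have haN : a ∈ N := by
        rw [← Multiset.count_pos, hca, Multiset.count_pos]; exact haM
      have hamaxN : ∀ w ∈ N, w ≤ a := by
        intro w hw
        by_contra hcon
        push_neg at hcon
        have : N.count w = M.count w := habove w (lt_trans hlt hcon)
        have hwM : w ∈ M := by
          rw [← Multiset.count_pos, ← this, Multiset.count_pos]; exact hw
        exact absurd (hamax w hwM) (not_le.mpr hcon)
      rw [sortDesc_cons_max haM hamax, sortDesc_cons_max haN hamaxN]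
      apply List.Lex.cons
      apply ih (M.erase a) (N.erase a)
      · rw [Multiset.card_erase_of_mem haM, hM]; rfl
      · rw [Multiset.card_erase_of_mem haN, hN]; rfl
      · rwa [Multiset.count_erase_of_ne (ne_of_lt hlt), Multiset.count_erase_of_ne (ne_of_lt hlt)]
      · intro w hw
        rcases eq_or_ne w a with rfl | hne
        · rw [Multiset.count_erase_self, Multiset.count_erase_self, hca]
        · rw [Multiset.count_erase_of_ne hne, Multiset.count_erase_of_ne hne, habove w hw]
    · subst heq
      have hNmax : ∀ w ∈ N, w ≤ v := by
        intro w hw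
        by_contra hcon
        push_neg at hcon
        have : N.count w = M.count w := habove w hcon
        have hwM : w ∈ M := by
          rw [← Multiset.count_pos, ← this, Multiset.count_pos]; exact hw
        exact absurd (hamax w hwM) (not_le.mpr hcon)
      by_cases hvN : v ∈ N
      · rw [sortDesc_cons_max hvM hamax, sortDesc_cons_max hvN hNmax]
        apply List.Lex.cons
        apply ih (M.erase v) (N.erase v)
        · rw [Multiset.card_erase_of_mem hvM, hM]; rfl
        · rw [Multiset.card_erase_of_mem hvN, hN]; rfl
        · rw [Multiset.count_erase_self, Multiset.count_erase_self]
          exact Nat.pred_lt_pred (by simpa [Multiset.count_pos] using hvN) hv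
        · intro w hw
          rw [Multiset.count_erase_of_ne (ne_of_gt hw), Multiset.count_erase_of_ne (ne_of_gt hw),
            habove w hw]
      · have hN0 : N ≠ 0 := by
          intro h; subst h; simp at hN
        obtain ⟨b, hbN, hbmax⟩ := multiset_exists_max N hN0
        have hbv : b < v := lt_of_le_of_ne (hNmax b hbN) (fun h => hvN (h ▸ hbN))
        rw [sortDesc_cons_max hvM hamax, sortDesc_cons_max hbN hbmax]
        exact List.Lex.rel hbv

theorem lex_perturb (M0 : Multiset β) {a b a' b' : β} (h1 : a' < a) (h2 : b' ≤ a') (h3 : b < b') :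
    List.Lex (· < ·) (sortDesc (a' ::ₘ b' ::ₘ M0)) (sortDesc (a ::ₘ b ::ₘ M0)) := by
  apply lex_of_count (Multiset.card M0 + 2) _ _ (by simp) (by simp) a
  · have hba : b ≠ a := ne_of_lt (lt_trans h3 (lt_of_le_of_lt h2 h1))
    have ha'a : a' ≠ a := ne_of_lt h1
    have hb'a : b' ≠ a := ne_of_lt (lt_of_le_of_lt h2 h1)
    simp [Multiset.count_cons, hba.symm, ha'a.symm, hb'a.symm]
  · intro w hw
    have h1' : a' ≠ w := ne_of_lt (lt_trans h1 hw)
    have h2' : b' ≠ w := ne_of_lt (lt_of_le_of_lt h2 (lt_trans h1 hw))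
    have h3' : a ≠ w := ne_of_lt hw
    have h4' : b ≠ w := ne_of_lt (lt_trans h3 (lt_of_le_of_lt h2 (lt_trans h1 hw)))
    simp [Multiset.count_cons, h1'.symm, h2'.symm, h3'.symm, h4'.symm]

/-! #### The potential function Φ -/

noncomputable def phiL (W : ℝ) (l : List ℤ) : ℝ := (l.map (fun e => W ^ e)).sum

theorem phiL_nonneg {W : ℝ} (hW : 0 < W) (l : List ℤ) : 0 ≤ phiL W l := by
  apply List.sum_nonneg
  intro x hx
  obtain ⟨e, _, rfl⟩ := List.mem_map.mp hx
  positivity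

theorem phiL_lt_of_lex {W : ℝ} (hW1 : 1 < W) :
    ∀ (l1 l2 : List ℤ), l1.length = l2.length → (l1.length : ℝ) < W →
    l1.Pairwise (· ≥ ·) → l2.Pairwise (· ≥ ·) →
    List.Lex (· < ·) l1 l2 → phiL W l1 < phiL W l2 := by
  intro l1 l2 hlen hlenW hs1 hs2 hlex
  induction hlex with
  | nil => simp at hlen
  | @rel a t1 b t2 hab =>
    have hW0 : (0:ℝ) < W := lt_trans one_pos hW1
    have hsum : (t1.map (fun e => W ^ e)).sum ≤ (t1.length : ℝ) * W ^ a := by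
      have := List.sum_le_card_nsmul (t1.map (fun e => W ^ e)) (W ^ a) ?_
      · simpa [nsmul_eq_mul] using this
      · intro x hx
        obtain ⟨e, he, rfl⟩ := List.mem_map.mp hx
        exact zpow_le_zpow_right₀ (le_of_lt hW1) ((List.pairwise_cons.mp hs1).1 e he)
    have h1 : phiL W (a :: t1) ≤ ((a :: t1).length : ℝ) * W ^ a := by
      unfold phiL
      simp only [List.map_cons, List.sum_cons, List.length_cons]
      push_cast
      linarith
    have h2 : ((a :: t1).length : ℝ) * W ^ a < W ^ (a + 1) := by
      have hz : (0:ℝ) < W ^ a := zpow_pos hW0 a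
      calc ((a :: t1).length : ℝ) * W ^ a < W * W ^ a := by
            apply mul_lt_mul_of_pos_right _ hz
            exact hlenW
        _ = W ^ (a + 1) := by
            rw [zpow_add_one₀ (ne_of_gt hW0)]; ring
    have h3 : (W:ℝ) ^ (a + 1) ≤ W ^ b := zpow_le_zpow_right₀ (le_of_lt hW1) hab
    have h4 : (W:ℝ) ^ b ≤ phiL W (b :: t2) := by
      unfold phiL
      simp only [List.map_cons, List.sum_cons]
      have := phiL_nonneg hW0 t2
      unfold phiL at this
      linarith
    linarith
  | @cons a t1 t2 h ih =>
    have hW0 : (0:ℝ) < W := lt_trans one_pos hW1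
    have := ih (by simpa using hlen) (by simp at hlenW ⊢; linarith)
      (List.pairwise_cons.mp hs1).2 (List.pairwise_cons.mp hs2).2
    unfold phiL at *
    simp only [List.map_cons, List.sum_cons]
    linarith

end DecMinAux

namespace DecMinAux

variable {α : Type*} [Fintype α] [DecidableEq α]

/-! #### Integer values and tight sets -/

noncomputable def qv (p : Finset α → EReal) (Z : Finset α) : ℤ :=
  if h : ∃ n : ℤ, p Z = ((n : ℝ) : EReal) then h.choose else 0

theorem qv_spec {p : Finset α → EReal} (hint : IntegerValued p) {Z : Finset α} (h : p Z ≠ ⊥) :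
    p Z = ((qv p Z : ℝ) : EReal) := by
  rcases hint Z with h' | h'
  · exact absurd h' h
  · rw [qv, dif_pos h']
    exact h'.choose_spec

def TightR (p : Finset α → EReal) (x : α → ℝ) (Z : Finset α) : Prop :=
  p Z = ((∑ s ∈ Z, x s : ℝ) : EReal)

theorem TightR.ne_bot {p : Finset α → EReal} {x : α → ℝ} {Z : Finset α} (h : TightR p x Z) :
    p Z ≠ ⊥ := by
  rw [h]; exact EReal.coe_ne_bot _

theorem TightR.sum_eq {p : Finset α → EReal} (hint : IntegerValued p) {x : α → ℝ} {Z : Finset α}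
    (h : TightR p x Z) : ∑ s ∈ Z, x s = (qv p Z : ℝ) := by
  have := h
  rw [TightR, qv_spec hint h.ne_bot] at this
  exact (EReal.coe_eq_coe_iff.mp this).symm

theorem tightR_of_sum_eq {p : Finset α → EReal} (hint : IntegerValued p) {x : α → ℝ}
    {Z : Finset α} (hbot : p Z ≠ ⊥) (h : ∑ s ∈ Z, x s = (qv p Z : ℝ)) : TightR p x Z := by
  rw [TightR, qv_spec hint hbot, h]

theorem tightR_empty {p : Finset α → EReal} (hp0 : p ∅ = 0) (x : α → ℝ) : TightR p x ∅ := by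
  rw [TightR, hp0]
  norm_num

theorem tightR_univ {p : Finset α → EReal} {x : α → ℝ} (hx : memB p x) : TightR p x Finset.univ :=
  hx.1.symm

theorem memB_le {p : Finset α → EReal} (hint : IntegerValued p) {x : α → ℝ} (hx : memB p x)
    {Z : Finset α} (h : p Z ≠ ⊥) : (qv p Z : ℝ) ≤ ∑ s ∈ Z, x s := by
  have := hx.2 Z
  rw [qv_spec hint h] at this
  exact EReal.coe_le_coe_iff.mp this

theorem tightR_inter_union {p : Finset α → EReal} (hsup : Supermodular p)
    (hint : IntegerValued p) {x : α → ℝ} (hx : memB p x) {X Y : Finset α}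
    (hX : TightR p x X) (hY : TightR p x Y) : TightR p x (X ∩ Y) ∧ TightR p x (X ∪ Y) := by
  have hsumeq : ∑ s ∈ X ∩ Y, x s + ∑ s ∈ X ∪ Y, x s = ∑ s ∈ X, x s + ∑ s ∈ Y, x s := by
    rw [add_comm]
    exact Finset.sum_union_inter
  have hI : p (X ∩ Y) ≠ ⊥ := by
    intro hbot
    have := hsup X Y
    rw [hbot, hX, hY, EReal.bot_add] at this
    exact absurd (le_bot_iff.mp this) (EReal.coe_ne_bot _)
  have hU : p (X ∪ Y) ≠ ⊥ := by
    intro hbot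
    have := hsup X Y
    rw [hbot, hX, hY, EReal.add_bot] at this
    exact absurd (le_bot_iff.mp this) (EReal.coe_ne_bot _)
  have h1 : (qv p (X ∩ Y) : ℝ) ≤ ∑ s ∈ X ∩ Y, x s := memB_le hint hx hI
  have h2 : (qv p (X ∪ Y) : ℝ) ≤ ∑ s ∈ X ∪ Y, x s := memB_le hint hx hU
  have h3 : (∑ s ∈ X, x s) + (∑ s ∈ Y, x s) ≤ (qv p (X ∩ Y) : ℝ) + (qv p (X ∪ Y) : ℝ) := by
    have := hsup X Y
    rw [qv_spec hint hI, qv_spec hint hU, hX, hY, ← EReal.coe_add, ← EReal.coe_add] at this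
    exact EReal.coe_le_coe_iff.mp this
  constructor
  · rw [TightR, qv_spec hint hI]
    congr 1
    linarith
  · rw [TightR, qv_spec hint hU]
    congr 1
    linarith

noncomputable def Fmin (p : Finset α → EReal) (x : α → ℝ) (s : α) : Finset α :=
  ((Finset.univ : Finset (Finset α)).filter (fun Z => TightR p x Z ∧ s ∈ Z)).inf id

theorem Fmin_spec {p : Finset α → EReal} (hsup : Supermodular p) (hint : IntegerValued p)
    {x : α → ℝ} (hx : memB p x) (s : α) : TightR p x (Fmin p x s) ∧ s ∈ Fmin p x s := by
  rw [Fmin]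
  apply inf_induction (p := fun A => TightR p x A ∧ s ∈ A)
  · exact ⟨tightR_univ hx, by simp⟩
  · rintro A ⟨hA1, hA2⟩ B ⟨hB1, hB2⟩
    exact ⟨(tightR_inter_union hsup hint hx hA1 hB1).1, Finset.mem_inter.mpr ⟨hA2, hB2⟩⟩
  · intro Z hZ
    simpa using (Finset.mem_filter.mp hZ).2

theorem Fmin_subset {p : Finset α → EReal} {x : α → ℝ} {s : α} {Z : Finset α}
    (hZ : TightR p x Z) (hsZ : s ∈ Z) : Fmin p x s ⊆ Z := by
  have : Z ∈ (Finset.univ : Finset (Finset α)).filter (fun Z => TightR p x Z ∧ s ∈ Z) := by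
    simp [hZ, hsZ]
  exact Finset.inf_le this (f := id)

/-! #### Elementary moves -/

noncomputable def move (x : α → ℝ) (s t : α) (ε : ℝ) : α → ℝ :=
  fun u => x u + ε * ((if u = t then 1 else 0) - (if u = s then 1 else 0))

theorem move_sum (x : α → ℝ) (s t : α) (ε : ℝ) (Z : Finset α) :
    ∑ u ∈ Z, move x s t ε u =
      ∑ u ∈ Z, x u + ε * ((if t ∈ Z then (1:ℝ) else 0) - (if s ∈ Z then (1:ℝ) else 0)) := by
  unfold move
  rw [Finset.sum_add_distrib, ← Finset.mul_sum, Finset.sum_sub_distrib]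
  simp [Finset.sum_ite_eq']

theorem move_sum_same (x : α → ℝ) {s t : α} (ε : ℝ) {Z : Finset α} (h : s ∈ Z ↔ t ∈ Z) :
    ∑ u ∈ Z, move x s t ε u = ∑ u ∈ Z, x u := by
  rw [move_sum]
  by_cases hs : s ∈ Z
  · rw [if_pos hs, if_pos (h.mp hs)]; ring
  · rw [if_neg hs, if_neg (fun ht => hs (h.mpr ht))]; ring

theorem move_apply_s (x : α → ℝ) {s t : α} (hst : s ≠ t) (ε : ℝ) :
    move x s t ε s = x s - ε := by
  simp [move, hst]
  ring

theorem move_apply_t (x : α → ℝ) {s t : α} (hst : s ≠ t) (ε : ℝ) :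
    move x s t ε t = x t + ε := by
  simp [move, hst.symm]

theorem move_apply_other (x : α → ℝ) {s t u : α} (hus : u ≠ s) (hut : u ≠ t) (ε : ℝ) :
    move x s t ε u = x u := by
  simp [move, hus, hut]

theorem map_univ_split (f : α → ℝ) {s t : α} (hst : s ≠ t) :
    Finset.univ.val.map f
      = f s ::ₘ f t ::ₘ (((Finset.univ.erase s).erase t).val.map f) := by
  have h1 : (Finset.univ : Finset α).val = s ::ₘ (Finset.univ.erase s).val := by
    rw [Finset.erase_val]
    exact (Multiset.cons_erase (by simp : s ∈ (Finset.univ : Finset α).val)).symm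
  have h2 : (Finset.univ.erase s).val = t ::ₘ ((Finset.univ.erase s).erase t).val := by
    rw [Finset.erase_val (Finset.univ.erase s)]
    refine (Multiset.cons_erase ?_).symm
    rw [Finset.mem_val, Finset.mem_erase]
    exact ⟨hst.symm, Finset.mem_univ t⟩
  rw [h1, h2, Multiset.map_cons, Multiset.map_cons]

theorem map_move_split (x : α → ℝ) {s t : α} (hst : s ≠ t) (ε : ℝ) :
    Finset.univ.val.map (move x s t ε) =
      (x s - ε) ::ₘ (x t + ε) ::ₘ (((Finset.univ.erase s).erase t).val.map x) := by
  rw [map_univ_split (move x s t ε) hst, move_apply_s x hst, move_apply_t x hst]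
  congr 1
  congr 1
  apply Multiset.map_congr rfl
  intro u hu
  rw [Finset.mem_val, Finset.mem_erase] at hu
  have hu2 := Finset.mem_erase.mp hu.2
  exact move_apply_other x hu2.1 hu.1 ε

theorem move_memB {p : Finset α → EReal} (hint : IntegerValued p) {x : α → ℝ} (hx : memB p x)
    {s t : α} (hst : s ≠ t) {ε : ℝ} (hε0 : 0 ≤ ε)
    (htight : ∀ Z, TightR p x Z → s ∈ Z → t ∈ Z)
    (hslack : ∀ Z : Finset α, p Z ≠ ⊥ → ¬TightR p x Z → s ∈ Z → t ∉ Z →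
      ε ≤ ∑ u ∈ Z, x u - (qv p Z : ℝ)) :
    memB p (move x s t ε) := by
  constructor
  · rw [show ∑ u, move x s t ε u = ∑ u ∈ Finset.univ, move x s t ε u from rfl,
      move_sum_same x ε (by simp)]
    exact hx.1
  · intro Z
    by_cases hbot : p Z = ⊥
    · rw [hbot]; exact bot_le
    · rw [qv_spec hint hbot, EReal.coe_le_coe_iff]
      have hle : (qv p Z : ℝ) ≤ ∑ u ∈ Z, x u := memB_le hint hx hbot
      rw [move_sum]
      by_cases hsZ : s ∈ Z <;> by_cases htZ : t ∈ Z
      · rw [if_pos hsZ, if_pos htZ]; linarith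
      · rw [if_pos hsZ, if_neg htZ]
        by_cases htt : TightR p x Z
        · exact absurd (htight Z htt hsZ) htZ
        · have := hslack Z hbot htt hsZ htZ
          linarith
      · rw [if_neg hsZ, if_pos htZ]; linarith
      · rw [if_neg hsZ, if_neg htZ]; linarith

/-! #### Level sets of the real dec-min element are tight -/

theorem levelset_tight {p : Finset α → EReal} (hp0 : p ∅ = 0) (hsup : Supermodular p)
    (hint : IntegerValued p) {mR : α → ℝ} (hmR : DecMinR p mR) (c : ℝ) :
    TightR p mR (Finset.univ.filter (fun s => c ≤ mR s)) := by
  have hx : memB p mR := hmR.1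
  set T := Finset.univ.filter (fun s => c ≤ mR s) with hT
  have key : ∀ s ∈ T, Fmin p mR s ⊆ T := by
    intro s hs
    by_contra hcon
    rw [Finset.not_subset] at hcon
    obtain ⟨t, htF, htT⟩ := hcon
    have hcs : c ≤ mR s := (Finset.mem_filter.mp hs).2
    have hct : mR t < c := by
      by_contra h
      exact htT (Finset.mem_filter.mpr ⟨Finset.mem_univ t, not_lt.mp h⟩)
    have hst : s ≠ t := fun h => (absurd (h ▸ hcs) (not_le.mpr hct))
    have hts : mR t < mR s := lt_of_lt_of_le hct hcs
    -- slack bound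
    set d0 := (mR s - mR t) / 2 with hd0
    have hd0pos : 0 < d0 := by rw [hd0]; linarith
    set Sbad := (Finset.univ : Finset (Finset α)).filter
      (fun Z => p Z ≠ ⊥ ∧ ¬TightR p mR Z ∧ s ∈ Z ∧ t ∉ Z) with hSbad
    have hslackpos : ∀ Z ∈ Sbad, 0 < ∑ u ∈ Z, mR u - (qv p Z : ℝ) := by
      intro Z hZ
      have hb := (Finset.mem_filter.mp hZ).2.1
      have hnt := (Finset.mem_filter.mp hZ).2.2.1
      have hle := memB_le hint hx hb
      rcases lt_or_eq_of_le hle with h | h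
      · linarith
      · exact absurd (tightR_of_sum_eq hint hb h.symm) hnt
    set δ := if h : Sbad.Nonempty
      then min d0 (Sbad.inf' h (fun Z => ∑ u ∈ Z, mR u - (qv p Z : ℝ))) else d0 with hδ
    have hδpos : 0 < δ := by
      rw [hδ]
      split_ifs with h
      · refine lt_min hd0pos ?_
        rw [Finset.lt_inf'_iff]
        exact hslackpos
      · exact hd0pos
    have hδd0 : δ ≤ d0 := by
      rw [hδ]; split_ifs with h
      · exact min_le_left _ _
      · exact le_refl _
    have hδslack : ∀ Z : Finset α, p Z ≠ ⊥ → ¬TightR p mR Z → s ∈ Z → t ∉ Z →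
        δ ≤ ∑ u ∈ Z, mR u - (qv p Z : ℝ) := by
      intro Z hb hnt hsZ htZ
      have hZmem : Z ∈ Sbad := by
        rw [hSbad, Finset.mem_filter]
        exact ⟨Finset.mem_univ Z, hb, hnt, hsZ, htZ⟩
      rw [hδ, dif_pos ⟨Z, hZmem⟩]
      exact le_trans (min_le_right _ _) (Finset.inf'_le _ hZmem)
    have htightprop : ∀ Z, TightR p mR Z → s ∈ Z → t ∈ Z := by
      intro Z hZ hsZ
      exact Fmin_subset hZ hsZ htF
    have hy : memB p (move mR s t δ) := move_memB hint hx hst (le_of_lt hδpos) htightprop hδslack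
    -- strict lex decrease
    have hLex : List.Lex (· < ·) (sortDescR (move mR s t δ)) (sortDescR mR) := by
      show List.Lex (· < ·) (sortDesc (Finset.univ.val.map (move mR s t δ)))
        (sortDesc (Finset.univ.val.map mR))
      rw [map_move_split mR hst δ, map_univ_split mR hst]
      apply lex_perturb
      · linarith
      · rw [hd0] at hδd0; linarith
      · linarith
    rcases hmR.2 (move mR s t δ) hy with h | h
    · rw [h] at hLex
      exact lexIrrefl _ hLex
    · exact lexAsymm _ _ h hLex
  have hTsup : T = T.sup (fun s => Fmin p mR s) := by
    apply Finset.Subset.antisymm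
    · intro u hu
      have h1 : Fmin p mR u ≤ T.sup (fun s => Fmin p mR s) := Finset.le_sup hu
      exact h1 ((Fmin_spec hsup hint hx u).2)
    · show (T.sup fun s => Fmin p mR s) ≤ T
      exact Finset.sup_le key
  rw [hTsup]
  apply Finset.sup_induction
  · rw [Finset.bot_eq_empty]
    exact tightR_empty hp0 mR
  · intro A hA B hB
    exact (tightR_inter_union hsup hint hx hA hB).2
  · intro b hb
    exact (Fmin_spec hsup hint hx b).1

end DecMinAux

namespace DecMinAux

variable {α : Type*} [Fintype α] [DecidableEq α]

/-! #### Integral members -/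

theorem memBZ_iff {p : Finset α → EReal} (y : α → ℤ) :
    memBZ p y ↔ memB p (fun u => (y u : ℝ)) := by
  unfold memBZ memB
  push_cast
  rfl

theorem memBZ_sum_eq {p : Finset α → EReal} (hint : IntegerValued p)
    (hfin : p (Finset.univ : Finset α) ≠ ⊥) {y : α → ℤ} (hy : memBZ p y) :
    ∑ s, y s = qv p Finset.univ := by
  have h := hy.1
  rw [qv_spec hint hfin] at h
  have := EReal.coe_eq_coe_iff.mp h
  exact_mod_cast this

def exch (w : α → ℤ) (s t : α) : α → ℤ :=
  fun u => w u + (if u = t then 1 else 0) - (if u = s then 1 else 0)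

theorem exch_coe (w : α → ℤ) (s t : α) :
    (fun u => ((exch w s t u : ℤ) : ℝ)) = move (fun u => (w u : ℝ)) s t 1 := by
  funext u
  unfold exch move
  push_cast [apply_ite (fun z : ℤ => (z : ℝ))]
  ring

theorem exch_apply_s (w : α → ℤ) {s t : α} (hst : s ≠ t) : exch w s t s = w s - 1 := by
  simp [exch, hst]

theorem exch_apply_t (w : α → ℤ) {s t : α} (hst : s ≠ t) : exch w s t t = w t + 1 := by
  simp [exch, hst.symm]

theorem exch_apply_other (w : α → ℤ) {s t u : α} (hus : u ≠ s) (hut : u ≠ t) :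
    exch w s t u = w u := by
  simp [exch, hus, hut]

/-- Summation of `g ∘ exch` versus `g ∘ w`. -/
theorem exch_sum (w : α → ℤ) {s t : α} (hst : s ≠ t) (g : ℤ → ℝ) :
    ∑ u, g (exch w s t u) =
      ∑ u, g (w u) - g (w s) - g (w t) + g (w s - 1) + g (w t + 1) := by
  have hs : s ∈ (Finset.univ : Finset α) := Finset.mem_univ s
  have ht : t ∈ Finset.univ.erase s := Finset.mem_erase.mpr ⟨hst.symm, Finset.mem_univ t⟩
  have split : ∀ f : α → ℝ, ∑ u, f u = f s + (f t + ∑ u ∈ (Finset.univ.erase s).erase t, f u) := by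
    intro f
    rw [← Finset.add_sum_erase _ f hs, ← Finset.add_sum_erase _ f ht]
  rw [split (fun u => g (exch w s t u)), split (fun u => g (w u))]
  have hoff : ∑ u ∈ (Finset.univ.erase s).erase t, g (exch w s t u)
      = ∑ u ∈ (Finset.univ.erase s).erase t, g (w u) := by
    apply Finset.sum_congr rfl
    intro u hu
    have h1 := Finset.mem_erase.mp hu
    have h2 := Finset.mem_erase.mp h1.2
    rw [exch_apply_other w h2.1 h1.1]
  rw [hoff, exch_apply_s w hst, exch_apply_t w hst]
  ring

/-- The integral exchange: if every `w`-tight set containing `s` contains `t`,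
then moving a unit from `s` to `t` stays in `B ∩ ℤ^S`. -/
theorem exch_memBZ {p : Finset α → EReal} (hint : IntegerValued p) {w : α → ℤ}
    (hw : memBZ p w) {s t : α} (hst : s ≠ t)
    (htight : ∀ Z, TightR p (fun u => (w u : ℝ)) Z → s ∈ Z → t ∈ Z) :
    memBZ p (exch w s t) := by
  rw [memBZ_iff]
  rw [exch_coe]
  have hwB : memB p (fun u => (w u : ℝ)) := (memBZ_iff w).mp hw
  apply move_memB hint hwB hst zero_le_one htight
  intro Z hb hnt hsZ htZ
  have hle : (qv p Z : ℝ) ≤ ∑ u ∈ Z, ((w u : ℤ) : ℝ) := memB_le hint hwB hb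
  have hne : ∑ u ∈ Z, ((w u : ℤ) : ℝ) ≠ (qv p Z : ℝ) := by
    intro h
    exact hnt (tightR_of_sum_eq hint hb h)
  have hint' : (qv p Z : ℝ) + 1 ≤ ∑ u ∈ Z, ((w u : ℤ) : ℝ) := by
    have h1 : ((qv p Z : ℤ) : ℝ) < ((∑ u ∈ Z, w u : ℤ) : ℝ) := by
      push_cast
      exact lt_of_le_of_ne hle (Ne.symm hne)
    have h2 : (qv p Z : ℤ) < ∑ u ∈ Z, w u := by exact_mod_cast h1
    have h3 : (qv p Z : ℤ) + 1 ≤ ∑ u ∈ Z, w u := h2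
    calc (qv p Z : ℝ) + 1 = (((qv p Z : ℤ) + 1 : ℤ) : ℝ) := by push_cast; ring
      _ ≤ ((∑ u ∈ Z, w u : ℤ) : ℝ) := by exact_mod_cast h3
      _ = ∑ u ∈ Z, ((w u : ℤ) : ℝ) := by push_cast; rfl
  linarith

/-! #### Φ as a sum over coordinates -/

noncomputable def PhiF (W : ℝ) (y : α → ℤ) : ℝ := ∑ s, W ^ (y s)

theorem phiL_sortDescZ (W : ℝ) (y : α → ℤ) :
    phiL W (sortDescZ y) = PhiF W y := by
  unfold phiL PhiF
  have hcoe : ((sortDescZ y : List ℤ) : Multiset ℤ) = Finset.univ.val.map y :=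
    sortDesc_coe (Finset.univ.val.map y)
  have : ((sortDescZ y).map (fun e => W ^ e)).sum
      = (((sortDescZ y : List ℤ) : Multiset ℤ).map (fun e => W ^ e)).sum := by
    simp
  rw [this, hcoe, Multiset.map_map]
  rfl

theorem sortDescZ_sorted (y : α → ℤ) : (sortDescZ y).Pairwise (· ≥ ·) :=
  sortDesc_sorted (Finset.univ.val.map y)

theorem sortDescZ_length (y : α → ℤ) : (sortDescZ y).length = Fintype.card α := by
  have := sortDesc_length (Finset.univ.val.map y)
  simpa [sortDescZ, sortDesc] using this

end DecMinAux

namespace DecMinAux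

variable {α : Type*} [Fintype α] [DecidableEq α]

/-- Variant of `exch_sum` for coordinate-dependent integrands. -/
theorem exch_sum' (w : α → ℤ) {s t : α} (hst : s ≠ t) (g : α → ℤ → ℤ) :
    ∑ u, g u (exch w s t u) =
      ∑ u, g u (w u) - g s (w s) - g t (w t) + g s (w s - 1) + g t (w t + 1) := by
  have hs : s ∈ (Finset.univ : Finset α) := Finset.mem_univ s
  have ht : t ∈ Finset.univ.erase s := Finset.mem_erase.mpr ⟨hst.symm, Finset.mem_univ t⟩
  have split : ∀ f : α → ℤ, ∑ u, f u = f s + (f t + ∑ u ∈ (Finset.univ.erase s).erase t, f u) := by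
    intro f
    rw [← Finset.add_sum_erase _ f hs, ← Finset.add_sum_erase _ f ht]
  rw [split (fun u => g u (exch w s t u)), split (fun u => g u (w u))]
  have hoff : ∑ u ∈ (Finset.univ.erase s).erase t, g u (exch w s t u)
      = ∑ u ∈ (Finset.univ.erase s).erase t, g u (w u) := by
    apply Finset.sum_congr rfl
    intro u hu
    have h1 := Finset.mem_erase.mp hu
    have h2 := Finset.mem_erase.mp h1.2
    rw [exch_apply_other w h2.1 h1.1]
  rw [hoff, exch_apply_s w hst, exch_apply_t w hst]
  ring

/-- **Key theorem**: an integral member of `B` lying in the box of `m_ℝ` and tight on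
all `m_ℝ`-tight sets is a dec-min element of `B ∩ ℤ^S`. -/
theorem box_chain_decmin {p : Finset α → EReal} (hp0 : p ∅ = 0)
    (hfin : p (Finset.univ : Finset α) ≠ ⊥) (hsup : Supermodular p) (hint : IntegerValued p)
    {mR : α → ℝ} (hmR : DecMinR p mR) {z : α → ℤ} (hz : memBZ p z)
    (hbox1 : ∀ s, ⌊mR s⌋ ≤ z s) (hbox2 : ∀ s, z s ≤ ⌈mR s⌉)
    (hchain : ∀ Z, TightR p mR Z → TightR p (fun u => (z u : ℝ)) Z) :
    DecMinZ p z := by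
  refine ⟨hz, ?_⟩
  intro y0 hy0
  rcases isEmpty_or_nonempty α with hemp | hne
  · left
    unfold sortDescZ
    rw [Finset.univ_eq_empty]
    simp
  · -- nonempty case
    by_contra hcon
    have hLex : List.Lex (· < ·) (sortDescZ y0) (sortDescZ z) := by
      rcases lexTrichotomy (sortDescZ z) (sortDescZ y0) with h | h | h
      · exact absurd (Or.inl h) hcon
      · exact absurd (Or.inr h) hcon
      · exact h
    set n := Fintype.card α with hn
    have hn1 : 1 ≤ n := Fintype.card_pos
    set W : ℝ := (n : ℝ) + 1 with hW
    have hW1 : 1 < W := by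
      rw [hW]
      have : (1:ℝ) ≤ (n:ℝ) := by exact_mod_cast hn1
      linarith
    have hW0 : 0 < W := lt_trans one_pos hW1
    -- the bounded region
    set M : ℤ := Finset.univ.sup' Finset.univ_nonempty (fun s => max (z s) (y0 s)) with hM
    have hMz : ∀ s, z s ≤ M := fun s =>
      le_trans (le_max_left _ _) (Finset.le_sup' (fun s => max (z s) (y0 s)) (Finset.mem_univ s))
    have hMy0 : ∀ s, y0 s ≤ M := fun s =>
      le_trans (le_max_right _ _) (Finset.le_sup' (fun s => max (z s) (y0 s)) (Finset.mem_univ s))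
    set A : Set (α → ℤ) := {y | memBZ p y ∧ ∀ s, y s ≤ M} with hA
    set Lo : ℤ := qv p Finset.univ - ((n - 1 : ℕ) : ℤ) * M with hLo
    have hAfin : A.Finite := by
      apply Set.Finite.subset (Set.Finite.pi (fun _ : α => Set.finite_Icc Lo M))
      intro y hy
      rw [Set.mem_pi]
      intro s _
      rw [Set.mem_Icc]
      refine ⟨?_, hy.2 s⟩
      have hsum : ∑ u, y u = qv p Finset.univ := memBZ_sum_eq hint hfin hy.1
      have hsplit : y s + ∑ u ∈ Finset.univ.erase s, y u = ∑ u, y u :=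
        Finset.add_sum_erase _ y (Finset.mem_univ s)
      have hbound : ∑ u ∈ Finset.univ.erase s, y u ≤ ((n - 1 : ℕ) : ℤ) * M := by
        calc ∑ u ∈ Finset.univ.erase s, y u ≤ ∑ u ∈ Finset.univ.erase s, M :=
              Finset.sum_le_sum (fun u _ => hy.2 u)
          _ = ((n - 1 : ℕ) : ℤ) * M := by
              rw [Finset.sum_const, Finset.card_erase_of_mem (Finset.mem_univ s)]
              rw [Finset.card_univ, ← hn]
              simp [mul_comm]
      rw [hLo]
      omega
    have hy0A : y0 ∈ A := ⟨hy0, hMy0⟩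
    have hzA : z ∈ A := ⟨hz, hMz⟩
    set f : (α → ℤ) → ℝ ×ₗ ℤ := fun y => toLex (PhiF W y, ∑ s, |y s - z s|) with hf
    obtain ⟨w, hwA, hwmin⟩ := Set.exists_min_image A f hAfin ⟨y0, hy0A⟩
    have hwB : memB p (fun u => (w u : ℝ)) := (memBZ_iff w).mp hwA.1
    -- the minimizer is z itself
    have hwz : w = z := by
      by_contra hwne
      obtain ⟨d0, hd0⟩ := Function.ne_iff.mp hwne
      set D : Finset α := Finset.univ.filter (fun s => w s ≠ z s) with hD
      have hDne : D.Nonempty := ⟨d0, Finset.mem_filter.mpr ⟨Finset.mem_univ _, hd0⟩⟩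
      obtain ⟨s0, hs0D, hs0max⟩ := Finset.exists_max_image D mR hDne
      set cstar := mR s0 with hcstar
      by_cases hcase : ∃ s ∈ D, mR s = cstar ∧ z s < w s
      · obtain ⟨s, hsD, hsc, hszw⟩ := hcase
        set F := Fmin p (fun u => (w u : ℝ)) s with hF
        have hFspec := Fmin_spec hsup hint hwB s
        have hFz : (qv p F : ℝ) ≤ ∑ u ∈ F, ((z u : ℤ) : ℝ) :=
          memB_le hint ((memBZ_iff z).mp hz) hFspec.1.ne_bot
        have hFw : ∑ u ∈ F, ((w u : ℤ) : ℝ) = (qv p F : ℝ) := hFspec.1.sum_eq hint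
        have hzF : ∑ u ∈ F, w u ≤ ∑ u ∈ F, z u := by
          have : (((∑ u ∈ F, w u : ℤ)) : ℝ) ≤ ((∑ u ∈ F, z u : ℤ) : ℝ) := by
            push_cast
            rw [show ∑ u ∈ F, (w u : ℝ) = ∑ u ∈ F, ((w u : ℤ) : ℝ) from rfl, hFw]
            exact le_trans (le_refl _) (by push_cast at hFz ⊢; linarith)
          exact_mod_cast this
        obtain ⟨t, htF, htwz⟩ : ∃ t ∈ F, w t < z t := by
          by_contra hno
          push_neg at hno
          have hlt : ∑ u ∈ F, z u < ∑ u ∈ F, w u :=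
            Finset.sum_lt_sum (fun i hi => hno i hi) ⟨s, hFspec.2, hszw⟩
          omega
        have hst : s ≠ t := by
          intro h
          rw [h] at hszw
          omega
        have htight : ∀ Z, TightR p (fun u => (w u : ℝ)) Z → s ∈ Z → t ∈ Z :=
          fun Z hZ hsZ => Fmin_subset hZ hsZ htF
        set y' := exch w s t with hy'
        have hy'BZ : memBZ p y' := exch_memBZ hint hwA.1 hst htight
        have hy'A : y' ∈ A := by
          refine ⟨hy'BZ, fun u => ?_⟩
          by_cases hut : u = t
          · rw [hy', hut, exch_apply_t w hst]
            have h1 := hMz t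
            omega
          · by_cases hus : u = s
            · rw [hy', hus, exch_apply_s w hst]
              have h := hwA.2 s
              omega
            · rw [hy', exch_apply_other w hus hut]
              exact hwA.2 u
        have hmin := hwmin y' hy'A
        -- Φ difference
        have hPhi : PhiF W y' = PhiF W w - W ^ (w s) - W ^ (w t) + W ^ (w s - 1) + W ^ (w t + 1) := by
          rw [hy']
          exact exch_sum w hst (fun e => W ^ e)
        rcases lt_trichotomy (w t) (w s - 1) with hcmp | hcmp | hcmp
        · -- strict Φ decrease: contradiction with minimality
          have hzlt : W ^ (w t) < W ^ (w s - 1) := zpow_lt_zpow_right₀ hW1 hcmp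
          have hd : PhiF W y' < PhiF W w := by
            have e1 : W ^ (w t + 1) = W ^ (w t) * W := by
              rw [zpow_add_one₀ (ne_of_gt hW0)]
            have e2 : W ^ (w s) = W ^ (w s - 1) * W := by
              rw [← zpow_add_one₀ (ne_of_gt hW0)]
              congr 1
              omega
            rw [hPhi, e1, e2]
            nlinarith [hzlt, hW1]
          rw [hf] at hmin
          rcases Prod.Lex.le_iff.mp hmin with h | h
          · simp only [ofLex_toLex] at h
            linarith
          · simp only [ofLex_toLex] at h
            linarith [h.1.le]
        · -- Φ equal, deviation decreases: contradiction
          have hPhiEq : PhiF W y' = PhiF W w := by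
            rw [hPhi]
            have e1 : W ^ (w t + 1) = W ^ (w s) := by congr 1; omega
            have e2 : W ^ (w s - 1) = W ^ (w t) := by congr 1; omega
            rw [e1, e2]
            ring
          have hdev : ∑ u, |y' u - z u| = (∑ u, |w u - z u|) - 2 := by
            rw [hy', exch_sum' w hst (fun u e => |e - z u|)]
            have e1 : |w s - 1 - z s| = |w s - z s| - 1 := by
              rw [abs_of_nonneg (by omega : (0:ℤ) ≤ w s - z s),
                abs_of_nonneg (by omega : (0:ℤ) ≤ w s - 1 - z s)]
              omega
            have e2 : |w t + 1 - z t| = |w t - z t| - 1 := by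
              rw [abs_of_nonpos (by omega : w t - z t ≤ 0),
                abs_of_nonpos (by omega : w t + 1 - z t ≤ 0)]
              omega
            omega
          rw [hf] at hmin
          rcases Prod.Lex.le_iff.mp hmin with h | h
          · simp only [ofLex_toLex] at h
            linarith [hPhiEq]
          · simp only [ofLex_toLex] at h
            have := h.2
            omega
        · -- w t ≥ w s : t is a higher-level deviating coordinate, contradiction
          have hzts : z s + 2 ≤ z t := by omega
          have hmRts : mR s < mR t := by
            have hb1 := hbox1 s
            have hb2 := hbox2 t
            have h1 : (⌈mR t⌉ : ℝ) ≥ ((⌊mR s⌋ + 2 : ℤ) : ℝ) := by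
              exact_mod_cast (by omega : (⌊mR s⌋ : ℤ) + 2 ≤ ⌈mR t⌉)
            have h2 : (⌈mR t⌉ : ℝ) < mR t + 1 := Int.ceil_lt_add_one (mR t)
            have h3 : mR s < (⌊mR s⌋ : ℝ) + 1 := Int.lt_floor_add_one (mR s)
            push_cast at h1
            linarith
          have htD : t ∈ D := Finset.mem_filter.mpr ⟨Finset.mem_univ t, by omega⟩
          have hle := hs0max t htD
          rw [hsc] at hmRts
          linarith
      · -- all top-level deviations are deficits: violated level-set constraint
        push_neg at hcase
        set T := Finset.univ.filter (fun u => cstar ≤ mR u) with hT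
        have hTt : TightR p mR T := levelset_tight hp0 hsup hint hmR cstar
        have hTz : ∑ u ∈ T, ((z u : ℤ) : ℝ) = (qv p T : ℝ) := (hchain T hTt).sum_eq hint
        have hTw : (qv p T : ℝ) ≤ ∑ u ∈ T, ((w u : ℤ) : ℝ) := memB_le hint hwB hTt.ne_bot
        have hwle : ∀ u ∈ T, w u ≤ z u := by
          intro u huT
          by_cases huD : u ∈ D
          · have h1 : mR u ≤ cstar := hs0max u huD
            have h2 : cstar ≤ mR u := (Finset.mem_filter.mp huT).2
            have h3 : mR u = cstar := le_antisymm h1 h2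
            have h4 := hcase u huD h3
            have h5 : w u ≠ z u := (Finset.mem_filter.mp huD).2
            omega
          · have : ¬ (w u ≠ z u) := fun h => huD (Finset.mem_filter.mpr ⟨Finset.mem_univ u, h⟩)
            omega
        have hs0T : s0 ∈ T := Finset.mem_filter.mpr ⟨Finset.mem_univ s0, le_refl _⟩
        have hs0lt : w s0 < z s0 := by
          have h4 := hcase s0 hs0D rfl
          have h5 : w s0 ≠ z s0 := (Finset.mem_filter.mp hs0D).2
          omega
        have hlt : ∑ u ∈ T, w u < ∑ u ∈ T, z u :=
          Finset.sum_lt_sum hwle ⟨s0, hs0T, hs0lt⟩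
        have hltR : ∑ u ∈ T, ((w u : ℤ) : ℝ) < ∑ u ∈ T, ((z u : ℤ) : ℝ) := by
          push_cast
          exact_mod_cast hlt
        linarith
    -- conclude
    have hmin0 := hwmin y0 hy0A
    rw [hwz, hf] at hmin0
    have hΦzy : PhiF W z ≤ PhiF W y0 := by
      rcases Prod.Lex.le_iff.mp hmin0 with h | h
      · exact le_of_lt h
      · exact le_of_eq h.1
    have hΦy0z : PhiF W y0 < PhiF W z := by
      rw [← phiL_sortDescZ, ← phiL_sortDescZ]
      apply phiL_lt_of_lex hW1
      · rw [sortDescZ_length, sortDescZ_length]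
      · rw [sortDescZ_length, hW, hn]
        linarith
      · exact sortDescZ_sorted y0
      · exact sortDescZ_sorted z
      · exact hLex
    linarith

end DecMinAux

namespace DecMinAux

variable {α : Type*} [Fintype α] [DecidableEq α]

/-- Coordinates with non-integral value. -/
noncomputable def fracS (x : α → ℝ) : Finset α :=
  Finset.univ.filter (fun s => ∀ k : ℤ, x s ≠ (k : ℝ))

theorem mem_fracS {x : α → ℝ} {s : α} : s ∈ fracS x ↔ ∀ k : ℤ, x s ≠ (k : ℝ) := by
  simp [fracS]

/-- Number of non-tight sets. -/
noncomputable def ntight (p : Finset α → EReal) (x : α → ℝ) : ℕ :=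
  ((Finset.univ : Finset (Finset α)).filter (fun Z => ¬ TightR p x Z)).card

/-- Termination measure. -/
noncomputable def muR (p : Finset α → EReal) (x : α → ℝ) : ℕ :=
  (fracS x).card * (2 ^ (Fintype.card α) + 1) + ntight p x

theorem ntight_le_pow (p : Finset α → EReal) (x : α → ℝ) :
    ntight p x ≤ 2 ^ (Fintype.card α) := by
  calc ntight p x ≤ (Finset.univ : Finset (Finset α)).card := Finset.card_filter_le _ _
    _ = 2 ^ (Fintype.card α) := by simp [Finset.card_univ]

/-- The invariant carried through the decomposition. -/
def GoodR (p : Finset α → EReal) (mR : α → ℝ) (x : α → ℝ) : Prop :=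
  memB p x ∧ (∀ s, ((⌊mR s⌋ : ℤ) : ℝ) ≤ x s) ∧ (∀ s, x s ≤ ((⌈mR s⌉ : ℤ) : ℝ)) ∧
    (∀ Z, TightR p mR Z → TightR p x Z)

/-- Integral candidates produced by the decomposition. -/
def IsEndpoint (p : Finset α → EReal) (mR : α → ℝ) (z : α → ℤ) : Prop :=
  memBZ p z ∧ (∀ s, ⌊mR s⌋ ≤ z s) ∧ (∀ s, z s ≤ ⌈mR s⌉) ∧
    (∀ Z, TightR p mR Z → TightR p (fun u => (z u : ℝ)) Z)

theorem frac_lt_ceil {x : ℝ} (h : ∀ k : ℤ, x ≠ (k : ℝ)) : x < (⌈x⌉ : ℝ) :=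
  lt_of_le_of_ne (Int.le_ceil x) (fun he => h ⌈x⌉ he)

theorem floor_lt_frac {x : ℝ} (h : ∀ k : ℤ, x ≠ (k : ℝ)) : ((⌊x⌋ : ℤ) : ℝ) < x :=
  lt_of_le_of_ne (Int.floor_le x) (fun he => h ⌊x⌋ he.symm)

/-- One elementary step of the decomposition: from a `Good` point with two
fractional coordinates `dec`, `inc` not separated by any tight set, we can move
a positive amount from `dec` to `inc` staying `Good` and decreasing the measure. -/
theorem decomp_step {p : Finset α → EReal} (hp0 : p ∅ = 0) (hsup : Supermodular p)
    (hint : IntegerValued p) {mR : α → ℝ} {x : α → ℝ} (hG : GoodR p mR x)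
    {inc dec : α} (hne : dec ≠ inc)
    (hfi : inc ∈ fracS x) (hfd : dec ∈ fracS x)
    (hBon : ∀ Z, TightR p x Z → (dec ∈ Z ↔ inc ∈ Z)) :
    ∃ δ : ℝ, 0 < δ ∧ GoodR p mR (move x dec inc δ) ∧ muR p (move x dec inc δ) < muR p x := by
  obtain ⟨hxB, hbox1, hbox2, hinv⟩ := hG
  have hfi' := mem_fracS.mp hfi
  have hfd' := mem_fracS.mp hfd
  have hceil : x inc < (⌈x inc⌉ : ℝ) := frac_lt_ceil hfi'
  have hfloor : ((⌊x dec⌋ : ℤ) : ℝ) < x dec := floor_lt_frac hfd'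
  set δint : ℝ := min ((⌈x inc⌉ : ℝ) - x inc) (x dec - (⌊x dec⌋ : ℝ)) with hδint
  have hδintpos : 0 < δint := lt_min (by linarith) (by linarith)
  set Sbad := (Finset.univ : Finset (Finset α)).filter
    (fun Z => p Z ≠ ⊥ ∧ ¬TightR p x Z ∧ dec ∈ Z ∧ inc ∉ Z) with hSbad
  have hslackpos : ∀ Z ∈ Sbad, 0 < ∑ u ∈ Z, x u - (qv p Z : ℝ) := by
    intro Z hZ
    have hb := (Finset.mem_filter.mp hZ).2.1
    have hnt := (Finset.mem_filter.mp hZ).2.2.1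
    have hle := memB_le hint hxB hb
    rcases lt_or_eq_of_le hle with h | h
    · linarith
    · exact absurd (tightR_of_sum_eq hint hb h.symm) hnt
  set δ := if h : Sbad.Nonempty
    then min δint (Sbad.inf' h (fun Z => ∑ u ∈ Z, x u - (qv p Z : ℝ))) else δint with hδ
  have hδpos : 0 < δ := by
    rw [hδ]
    split_ifs with h
    · refine lt_min hδintpos ?_
      rw [Finset.lt_inf'_iff]
      exact hslackpos
    · exact hδintpos
  have hδδint : δ ≤ δint := by
    rw [hδ]; split_ifs with h
    · exact min_le_left _ _
    · exact le_refl _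
  have hδslack : ∀ Z : Finset α, p Z ≠ ⊥ → ¬TightR p x Z → dec ∈ Z → inc ∉ Z →
      δ ≤ ∑ u ∈ Z, x u - (qv p Z : ℝ) := by
    intro Z hb hnt hdZ hiZ
    have hZmem : Z ∈ Sbad := by
      rw [hSbad, Finset.mem_filter]
      exact ⟨Finset.mem_univ Z, hb, hnt, hdZ, hiZ⟩
    rw [hδ, dif_pos ⟨Z, hZmem⟩]
    exact le_trans (min_le_right _ _) (Finset.inf'_le _ hZmem)
  set x' := move x dec inc δ with hx'
  have hx'B : memB p x' := by
    apply move_memB hint hxB hne (le_of_lt hδpos)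
    · intro Z hZ hdZ
      exact (hBon Z hZ).mp hdZ
    · exact hδslack
  -- value changes
  have hvs : x' dec = x dec - δ := move_apply_s x hne δ
  have hvt : x' inc = x inc + δ := move_apply_t x hne δ
  have hvo : ∀ u, u ≠ dec → u ≠ inc → x' u = x u := fun u h1 h2 => move_apply_other x h1 h2 δ
  have hδ1 : δ ≤ (⌈x inc⌉ : ℝ) - x inc := le_trans hδδint (min_le_left _ _)
  have hδ2 : δ ≤ x dec - (⌊x dec⌋ : ℝ) := le_trans hδδint (min_le_right _ _)
  -- tight preservation
  have htpres : ∀ Z, TightR p x Z → TightR p x' Z := by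
    intro Z hZ
    have : ∑ u ∈ Z, x' u = ∑ u ∈ Z, x u := move_sum_same x δ (hBon Z hZ)
    rw [TightR, this]
    exact hZ
  have hG' : GoodR p mR x' := by
    refine ⟨hx'B, ?_, ?_, ?_⟩
    · intro u
      by_cases h1 : u = dec
      · subst h1
        rw [hvs]
        have h3 : (⌊mR u⌋ : ℤ) ≤ ⌊x u⌋ := Int.le_floor.mpr (hbox1 u)
        have h4 : ((⌊mR u⌋ : ℤ) : ℝ) ≤ ((⌊x u⌋ : ℤ) : ℝ) := by exact_mod_cast h3
        linarith [hδ2]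
      · by_cases h2 : u = inc
        · subst h2
          rw [hvt]
          have := hbox1 u
          linarith [hδpos.le]
        · rw [hvo u h1 h2]
          exact hbox1 u
    · intro u
      by_cases h1 : u = dec
      · subst h1
        rw [hvs]
        have := hbox2 u
        linarith [hδpos.le]
      · by_cases h2 : u = inc
        · subst h2
          rw [hvt]
          have hcl : (⌈x u⌉ : ℤ) ≤ ⌈mR u⌉ := Int.ceil_le.mpr (hbox2 u)
          have : ((⌈x u⌉ : ℤ) : ℝ) ≤ ((⌈mR u⌉ : ℤ) : ℝ) := by exact_mod_cast hcl
          linarith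
        · rw [hvo u h1 h2]
          exact hbox2 u
    · intro Z hZ
      exact htpres Z (hinv Z hZ)
  -- measure decrease
  have hfsub : fracS x' ⊆ fracS x := by
    intro u hu
    by_cases h1 : u = dec
    · subst h1; exact hfd
    · by_cases h2 : u = inc
      · subst h2; exact hfi
      · rw [mem_fracS] at hu ⊢
        rwa [hvo u h1 h2] at hu
  have hntle : ntight p x' ≤ ntight p x := by
    apply Finset.card_le_card
    intro Z hZ
    rw [Finset.mem_filter] at hZ ⊢
    refine ⟨hZ.1, ?_⟩
    intro ht
    exact hZ.2 (htpres Z ht)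
  refine ⟨δ, hδpos, hG', ?_⟩
  by_cases hcase : δ = δint
  · -- a coordinate becomes integral
    have hint' : (∃ k : ℤ, x' inc = (k : ℝ)) ∨ (∃ k : ℤ, x' dec = (k : ℝ)) := by
      rcases min_cases ((⌈x inc⌉ : ℝ) - x inc) (x dec - (⌊x dec⌋ : ℝ)) with ⟨hm, _⟩ | ⟨hm, _⟩
      · left
        exact ⟨⌈x inc⌉, by rw [hvt, hcase, hδint, hm]; ring⟩
      · right
        exact ⟨⌊x dec⌋, by rw [hvs, hcase, hδint, hm]; ring⟩
    have hstrict : (fracS x').card < (fracS x).card := by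
      apply Finset.card_lt_card
      rw [Finset.ssubset_iff_of_subset hfsub]
      rcases hint' with ⟨k, hk⟩ | ⟨k, hk⟩
      · exact ⟨inc, hfi, fun h => (mem_fracS.mp h) k hk⟩
      · exact ⟨dec, hfd, fun h => (mem_fracS.mp h) k hk⟩
    have h2n := ntight_le_pow p x'
    rw [muR, muR]
    have hf' : (fracS x').card + 1 ≤ (fracS x).card := hstrict
    calc (fracS x').card * (2 ^ (Fintype.card α) + 1) + ntight p x'
        < ((fracS x').card + 1) * (2 ^ (Fintype.card α) + 1) := by
          rw [Nat.succ_mul]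
          exact Nat.add_lt_add_left (Nat.lt_succ_of_le h2n) _
      _ ≤ (fracS x).card * (2 ^ (Fintype.card α) + 1) := Nat.mul_le_mul_right _ hf'
      _ ≤ (fracS x).card * (2 ^ (Fintype.card α) + 1) + ntight p x := Nat.le_add_right _ _
  · -- a new tight set appears
    have hδlt : δ < δint := lt_of_le_of_ne hδδint hcase
    have hSne : Sbad.Nonempty := by
      by_contra hno
      rw [hδ, dif_neg hno] at hδlt
      exact absurd hδlt (lt_irrefl _)
    obtain ⟨Z0, hZ0mem, hZ0eq⟩ := Finset.exists_mem_eq_inf' hSne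
      (fun Z => ∑ u ∈ Z, x u - (qv p Z : ℝ))
    have hδeq : δ = ∑ u ∈ Z0, x u - (qv p Z0 : ℝ) := by
      rw [hδ, dif_pos hSne]
      rw [hδ, dif_pos hSne] at hδlt
      rcases min_cases δint (Sbad.inf' hSne (fun Z => ∑ u ∈ Z, x u - (qv p Z : ℝ))) with
        ⟨hm, _⟩ | ⟨hm, hml⟩
      · rw [hm] at hδlt
        exact absurd hδlt (lt_irrefl _)
      · rw [hm, hZ0eq]
    have hZb := (Finset.mem_filter.mp hZ0mem).2.1
    have hZnt := (Finset.mem_filter.mp hZ0mem).2.2.1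
    have hZd := (Finset.mem_filter.mp hZ0mem).2.2.2.1
    have hZi := (Finset.mem_filter.mp hZ0mem).2.2.2.2
    have hZ0tight : TightR p x' Z0 := by
      apply tightR_of_sum_eq hint hZb
      rw [move_sum]
      rw [if_neg hZi, if_pos hZd]
      rw [hδeq]
      ring
    have hntlt : ntight p x' < ntight p x := by
      apply Finset.card_lt_card
      constructor
      · intro Z hZ
        rw [Finset.mem_filter] at hZ ⊢
        exact ⟨hZ.1, fun ht => hZ.2 (htpres Z ht)⟩
      · intro hsub
        have : Z0 ∈ (Finset.univ : Finset (Finset α)).filter (fun Z => ¬ TightR p x' Z) := by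
          apply hsub
          rw [Finset.mem_filter]
          exact ⟨Finset.mem_univ _, hZnt⟩
        rw [Finset.mem_filter] at this
        exact this.2 hZ0tight
    rw [muR, muR]
    have hfle : (fracS x').card ≤ (fracS x).card := Finset.card_le_card hfsub
    exact Nat.add_lt_add_of_le_of_lt (Nat.mul_le_mul_right _ hfle) hntlt

end DecMinAux

namespace DecMinAux

variable {α : Type*} [Fintype α] [DecidableEq α]

theorem decomp_rec {p : Finset α → EReal} (hp0 : p ∅ = 0)
    (hsup : Supermodular p) (hint : IntegerValued p) (mR : α → ℝ) :
    ∀ (k : ℕ) (x : α → ℝ), muR p x = k → GoodR p mR x →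
    ∃ (n : ℕ) (w : Fin n → ℝ) (v : Fin n → α → ℤ),
      (∀ i, 0 ≤ w i) ∧ (∑ i, w i) = 1 ∧ (∀ i, IsEndpoint p mR (v i)) ∧
      ∀ s : α, x s = ∑ i, w i * ((v i s : ℤ) : ℝ) := by
  intro k
  induction k using Nat.strong_induction_on with
  | _ k ih =>
    intro x hk hG
    by_cases hfr : fracS x = ∅
    · -- x is integral
      have hex : ∀ s : α, ∃ m : ℤ, x s = (m : ℝ) := by
        intro s
        have : s ∉ fracS x := by rw [hfr]; exact Finset.notMem_empty s
        rw [mem_fracS] at this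
        push_neg at this
        exact this
      set z : α → ℤ := fun s => (hex s).choose with hzdef
      have hz : ∀ s, x s = ((z s : ℤ) : ℝ) := fun s => (hex s).choose_spec
      have hxz : x = fun u => ((z u : ℤ) : ℝ) := funext hz
      refine ⟨1, fun _ => 1, fun _ => z, fun _ => zero_le_one, by simp, ?_, ?_⟩
      · intro _
        refine ⟨(memBZ_iff z).mpr (hxz ▸ hG.1), ?_, ?_, ?_⟩
        · intro s
          have h1 := hG.2.1 s
          rw [hz s] at h1
          exact_mod_cast h1
        · intro s
          have h1 := hG.2.2.1 s
          rw [hz s] at h1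
          exact_mod_cast h1
        · intro Z hZ
          have := hG.2.2.2 Z hZ
          rwa [hxz] at this
      · intro s
        rw [Fin.sum_univ_one, one_mul, hz s]
    · -- there is a fractional coordinate
      have hfrne : (fracS x).Nonempty := Finset.nonempty_of_ne_empty hfr
      obtain ⟨s0, hs0f, hs0min⟩ := Finset.exists_min_image (fracS x)
        (fun s => (Fmin p x s).card) hfrne
      set F := Fmin p x s0 with hFdef
      have hFspec := Fmin_spec hsup hint hG.1 s0
      have hFsum : ∑ u ∈ F, x u = (qv p F : ℝ) := hFspec.1.sum_eq hint
      have ht : ∃ t ∈ F, t ≠ s0 ∧ t ∈ fracS x := by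
        by_contra hno
        push_neg at hno
        have hoint : ∀ u ∈ F.erase s0, ∃ m : ℤ, x u = (m : ℝ) := by
          intro u hu
          have h1 := Finset.mem_erase.mp hu
          have h2 := hno u h1.2 h1.1
          rw [mem_fracS] at h2
          push_neg at h2
          exact h2
        set g : α → ℤ := fun u => if h : ∃ m : ℤ, x u = (m : ℝ) then h.choose else 0 with hgdef
        have hgu : ∀ u ∈ F.erase s0, x u = ((g u : ℤ) : ℝ) := by
          intro u hu
          obtain ⟨m, hm⟩ := hoint u hu
          rw [hgdef]
          simp only
          rw [dif_pos ⟨m, hm⟩]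
          exact (⟨m, hm⟩ : ∃ m : ℤ, x u = (m : ℝ)).choose_spec
        have hsplit : x s0 + ∑ u ∈ F.erase s0, x u = ∑ u ∈ F, x u :=
          Finset.add_sum_erase _ x hFspec.2
        have hsum2 : ∑ u ∈ F.erase s0, x u = ((∑ u ∈ F.erase s0, g u : ℤ) : ℝ) := by
          rw [Finset.sum_congr rfl hgu]
          push_cast
          rfl
        have : x s0 = ((qv p F - ∑ u ∈ F.erase s0, g u : ℤ) : ℝ) := by
          have h5 : (((∑ u ∈ F.erase s0, g u : ℤ)) : ℝ) = ∑ u ∈ F.erase s0, x u := hsum2.symm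
          push_cast at h5 ⊢
          linarith [hsplit, hFsum, h5]
        exact (mem_fracS.mp hs0f) _ this
      obtain ⟨t, htF, hts0, htf⟩ := ht
      have hFt : Fmin p x t = F :=
        Finset.eq_of_subset_of_card_le (Fmin_subset hFspec.1 htF) (hs0min t htf)
      have hBon1 : ∀ Z, TightR p x Z → (t ∈ Z ↔ s0 ∈ Z) := by
        intro Z hZ
        constructor
        · intro h
          have hsub : Fmin p x t ⊆ Z := Fmin_subset hZ h
          rw [hFt] at hsub
          exact hsub hFspec.2
        · intro h
          have hsub : Fmin p x s0 ⊆ Z := Fmin_subset hZ h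
          exact hsub htF
      have hBon2 : ∀ Z, TightR p x Z → (s0 ∈ Z ↔ t ∈ Z) := fun Z hZ => (hBon1 Z hZ).symm
      obtain ⟨δ1, hδ1pos, hG1, hμ1⟩ := decomp_step hp0 hsup hint hG hts0 hs0f htf hBon1
      obtain ⟨δ2, hδ2pos, hG2, hμ2⟩ :=
        decomp_step hp0 hsup hint hG (Ne.symm hts0) htf hs0f hBon2
      set x1 := move x t s0 δ1 with hx1
      set x2 := move x s0 t δ2 with hx2
      obtain ⟨n1, w1, v1, hw1pos, hw1sum, hv1, hrep1⟩ :=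
        ih (muR p x1) (hk ▸ hμ1) x1 rfl hG1
      obtain ⟨n2, w2, v2, hw2pos, hw2sum, hv2, hrep2⟩ :=
        ih (muR p x2) (hk ▸ hμ2) x2 rfl hG2
      set θ : ℝ := δ2 / (δ1 + δ2) with hθ
      have hδsum : 0 < δ1 + δ2 := by linarith
      have hθ0 : 0 ≤ θ := div_nonneg (le_of_lt hδ2pos) (le_of_lt hδsum)
      have hθ1' : 1 - θ = δ1 / (δ1 + δ2) := by
        rw [hθ]
        field_simp
        ring
      have h1θ0 : 0 ≤ 1 - θ := by
        rw [hθ1']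
        exact div_nonneg (le_of_lt hδ1pos) (le_of_lt hδsum)
      have hcomb : ∀ u, x u = θ * x1 u + (1 - θ) * x2 u := by
        intro u
        by_cases h1 : u = s0
        · subst h1
          rw [hx1, hx2, move_apply_t x hts0 δ1, move_apply_s x (Ne.symm hts0) δ2]
          rw [hθ1', hθ]
          field_simp
          ring
        · by_cases h2 : u = t
          · subst h2
            rw [hx1, hx2, move_apply_s x hts0 δ1, move_apply_t x (Ne.symm hts0) δ2]
            rw [hθ1', hθ]
            field_simp
            ring
          · rw [hx1, hx2, move_apply_other x h2 h1 δ1, move_apply_other x h1 h2 δ2]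
            ring
      refine ⟨n1 + n2,
        Fin.addCases (fun i => θ * w1 i) (fun j => (1 - θ) * w2 j),
        Fin.addCases v1 v2, ?_, ?_, ?_, ?_⟩
      · intro i
        refine Fin.addCases ?_ ?_ i
        · intro j
          simp only [Fin.addCases_left]
          exact mul_nonneg hθ0 (hw1pos j)
        · intro j
          simp only [Fin.addCases_right]
          exact mul_nonneg h1θ0 (hw2pos j)
      · rw [Fin.sum_univ_add]
        simp only [Fin.addCases_left, Fin.addCases_right]
        rw [← Finset.mul_sum, ← Finset.mul_sum, hw1sum, hw2sum]
        ring
      · intro i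
        refine Fin.addCases ?_ ?_ i
        · intro j
          simp only [Fin.addCases_left]
          exact hv1 j
        · intro j
          simp only [Fin.addCases_right]
          exact hv2 j
      · intro s
        rw [Fin.sum_univ_add]
        simp only [Fin.addCases_left, Fin.addCases_right]
        have e1 : ∑ i : Fin n1, θ * w1 i * ((v1 i s : ℤ) : ℝ)
            = θ * ∑ i : Fin n1, w1 i * ((v1 i s : ℤ) : ℝ) := by
          rw [Finset.mul_sum]
          apply Finset.sum_congr rfl
          intro i _
          ring
        have e2 : ∑ j : Fin n2, (1 - θ) * w2 j * ((v2 j s : ℤ) : ℝ)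
            = (1 - θ) * ∑ j : Fin n2, w2 j * ((v2 j s : ℤ) : ℝ) := by
          rw [Finset.mul_sum]
          apply Finset.sum_congr rfl
          intro j _
          ring
        rw [e1, e2, ← hrep1 s, ← hrep2 s]
        exact hcomb s

end DecMinAux

/-- The unique dec-min element `m_ℝ` of an integral base-polyhedron is a convex
combination of the dec-min elements of the associated M-convex set `B ∩ ℤ^S`. -/
theorem decmin_convex_combination (p : Finset α → EReal) (hp0 : p ∅ = 0)
    (hfin : p (Finset.univ : Finset α) ≠ ⊥) (hsup : Supermodular p)
    (hint : IntegerValued p) (mR : α → ℝ) (hmR : DecMinR p mR) :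
    ∃ (n : ℕ) (w : Fin n → ℝ) (v : Fin n → α → ℤ),
      (∀ i, 0 ≤ w i) ∧ (∑ i, w i) = 1 ∧ (∀ i, DecMinZ p (v i)) ∧
      ∀ s : α, mR s = ∑ i, w i * ((v i s : ℤ) : ℝ) := by
  have hG : DecMinAux.GoodR p mR mR :=
    ⟨hmR.1, fun s => Int.floor_le (mR s), fun s => Int.le_ceil (mR s), fun Z hZ => hZ⟩
  obtain ⟨n, w, v, hw, hsum, hend, hrep⟩ :=
    DecMinAux.decomp_rec hp0 hsup hint mR (DecMinAux.muR p mR) mR rfl hG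
  refine ⟨n, w, v, hw, hsum, fun i => ?_, hrep⟩
  exact DecMinAux.box_chain_decmin hp0 hfin hsup hint hmR (hend i).1
    (hend i).2.1 (hend i).2.2.1 (hend i).2.2.2
end

section
/- Let B be an integral base-polyhedron and let W̄(x) := Σ_{s∈S} φ̄(x(s)), where φ̄ is the piecewise-linear extension of k ↦ k² given by φ̄(ξ) = (2k+1)|ξ| − k(k+1) with k = ⌊|ξ|⌋. Then the minimum value of W̄ over B equals the minimum of the square-sum Σ_{s∈S} x(s)² over the integer points B ∩ ℤ^S; moreover, for any minimizer x_ℝ of W̄ over B, there exists an integral minimizer x_ℤ ∈ B ∩ ℤ^S of W̄ with ⌊x_ℝ⌋ ≤ x_ℤ ≤ ⌈x_ℝ⌉. -/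
open Finset

variable {α : Type*} [Fintype α] [DecidableEq α]

/-- The piecewise-linear extension of `k ↦ k²`:
`φ̄(ξ) = (2k+1)|ξ| − k(k+1)` with `k = ⌊|ξ|⌋`. -/
noncomputable def phibar (ξ : ℝ) : ℝ :=
  (2 * (⌊|ξ|⌋ : ℝ) + 1) * |ξ| - (⌊|ξ|⌋ : ℝ) * ((⌊|ξ|⌋ : ℝ) + 1)

/-- `W̄(x) = Σ_{s∈S} φ̄(x(s))`. -/
noncomputable def Wbar {α : Type*} [Fintype α] (x : α → ℝ) : ℝ :=
  ∑ s, phibar (x s)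

/- ### auxiliary lemmas -/


lemma phibar_intCast (n : ℤ) : phibar (n : ℝ) = (n : ℝ)^2 := by
  unfold phibar
  rw [← Int.cast_abs, Int.floor_intCast]
  push_cast
  rw [sq, ← abs_mul_abs_self (n:ℝ)]
  ring

lemma phibar_affine (m : ℤ) (ξ : ℝ) (h1 : (m:ℝ) ≤ ξ) (h2 : ξ ≤ (m:ℝ) + 1) :
    phibar ξ = (2*(m:ℝ)+1)*ξ - (m:ℝ)*((m:ℝ)+1) := by
  rcases eq_or_lt_of_le h1 with he | h1
  · rw [← he, phibar_intCast]; ring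
  rcases eq_or_lt_of_le h2 with he | h2
  · rw [he]
    have h : ((m:ℝ)+1) = ((m+1 : ℤ) : ℝ) := by push_cast; ring
    rw [h, phibar_intCast]; push_cast; ring
  rcases le_or_gt 0 (m:ℝ) with hm | hm
  · have habs : |ξ| = ξ := abs_of_pos (lt_of_le_of_lt hm h1)
    have hfl : ⌊|ξ|⌋ = m := by
      rw [habs]; exact Int.floor_eq_iff.2 ⟨h1.le, h2⟩
    unfold phibar; rw [hfl, habs]
  · have hm1 : (m:ℝ) + 1 ≤ 0 := by
      have h : (m:ℤ) < 0 := by exact_mod_cast hm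
      have h2 : (m:ℤ) + 1 ≤ 0 := by omega
      exact_mod_cast h2
    have habs : |ξ| = -ξ := abs_of_neg (lt_of_lt_of_le h2 hm1)
    have hfl : ⌊|ξ|⌋ = -m-1 := by
      rw [habs, Int.floor_eq_iff]
      constructor <;> push_cast <;> linarith
    unfold phibar; rw [hfl, habs]; push_cast; ring

/- ### tight set machinery -/

def tightSet (p : Finset α → EReal) (x : α → ℝ) (Z : Finset α) : Prop :=
  p Z = ((∑ t ∈ Z, x t : ℝ) : EReal)

lemma ereal_squeeze (c d : EReal) (xI xU : ℝ) (hc : c ≤ ((xI:ℝ):EReal))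
    (hd : d ≤ ((xU:ℝ):EReal)) (hsum : (((xI + xU : ℝ)):EReal) ≤ c + d) :
    c = ((xI:ℝ):EReal) ∧ d = ((xU:ℝ):EReal) := by
  induction c using EReal.rec with
  | bot =>
    exfalso
    rw [EReal.bot_add] at hsum
    exact (EReal.coe_ne_bot _) (le_bot_iff.1 hsum)
  | top => exact absurd hc (by simp)
  | coe a =>
    induction d using EReal.rec with
    | bot =>
      exfalso
      rw [EReal.add_bot] at hsum
      exact (EReal.coe_ne_bot _) (le_bot_iff.1 hsum)
    | top => exact absurd hd (by simp)
    | coe b =>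
      rw [← EReal.coe_add] at hsum
      rw [EReal.coe_le_coe_iff] at hc hd hsum
      constructor <;> · norm_cast; linarith

lemma pz_real {p : Finset α → EReal} {x : α → ℝ} (hx : memB p x) (Z : Finset α)
    (hbot : p Z ≠ ⊥) : ∃ r : ℝ, p Z = ((r:ℝ):EReal) ∧ r ≤ ∑ t ∈ Z, x t := by
  have h := hx.2 Z
  set q := p Z with hq
  clear_value q
  induction q using EReal.rec with
  | bot => exact absurd rfl hbot
  | top => exact absurd h (by simp)
  | coe a => exact ⟨a, rfl, EReal.coe_le_coe_iff.1 h⟩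

lemma tight_inter_union {p : Finset α → EReal} {x : α → ℝ} (hsup : Supermodular p)
    (hx : memB p x) {X Y : Finset α} (hX : tightSet p x X) (hY : tightSet p x Y) :
    tightSet p x (X ∩ Y) ∧ tightSet p x (X ∪ Y) := by
  have hsum : ∑ t ∈ X ∩ Y, x t + ∑ t ∈ X ∪ Y, x t = ∑ t ∈ X, x t + ∑ t ∈ Y, x t := by
    rw [add_comm]; exact Finset.sum_union_inter
  exact ereal_squeeze _ _ _ _ (hx.2 _) (hx.2 _)
    (by rw [hsum, EReal.coe_add, ← hX, ← hY]; exact hsup X Y)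

omit [Fintype α] in
lemma inf'_closed {Q : Finset α → Prop} (hQ : ∀ A B, Q A → Q B → Q (A ∩ B)) :
    ∀ (F : Finset (Finset α)) (h : F.Nonempty), (∀ Z ∈ F, Q Z) → Q (F.inf' h id) := by
  intro F h
  induction h using Finset.Nonempty.cons_induction with
  | singleton a => intro hm; simpa using hm a (by simp)
  | cons a F ha hF ih =>
    intro hm
    rw [Finset.inf'_cons hF]
    exact hQ _ _ (hm a (Finset.mem_cons_self a F)) (ih fun Z hZ => hm Z (Finset.mem_cons_of_mem hZ))

lemma exists_mts {p : Finset α → EReal} {x : α → ℝ} (hsup : Supermodular p)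
    (hx : memB p x) (s : α) :
    ∃ W : Finset α, tightSet p x W ∧ s ∈ W ∧
      ∀ Z : Finset α, tightSet p x Z → s ∈ Z → W ⊆ Z := by
  classical
  set F : Finset (Finset α) :=
    univ.powerset.filter (fun Z => tightSet p x Z ∧ s ∈ Z) with hF
  have hU : (univ : Finset α) ∈ F := by
    simp only [hF, mem_filter, mem_powerset]
    exact ⟨subset_rfl, hx.1.symm, mem_univ s⟩
  have hne : F.Nonempty := ⟨_, hU⟩
  have hcl := inf'_closed (Q := fun Z => tightSet p x Z ∧ s ∈ Z)
      (fun A B hA hB => ⟨(tight_inter_union hsup hx hA.1 hB.1).1, mem_inter.2 ⟨hA.2, hB.2⟩⟩)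
      F hne (fun Z hZ => (mem_filter.1 hZ).2)
  refine ⟨F.inf' hne id, hcl.1, hcl.2, ?_⟩
  intro Z hZ hsZ
  exact Finset.inf'_le id (mem_filter.2 ⟨mem_powerset.2 (subset_univ Z), hZ, hsZ⟩)

/- ### box and fractional sets -/

def Box (xR x : α → ℝ) : Prop := ∀ t, ((⌊xR t⌋:ℝ)) ≤ x t ∧ x t ≤ ((⌈xR t⌉:ℝ))

noncomputable def fracSet {α : Type*} [Fintype α] (x : α → ℝ) : Finset α :=
  univ.filter (fun t => x t ≠ ((⌊x t⌋:ℝ)))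

lemma box_frac {xR x : α → ℝ} (hb : Box xR x) {t : α} (ht : x t ≠ ((⌊x t⌋:ℝ))) :
    ⌊x t⌋ = ⌊xR t⌋ ∧ ((⌊xR t⌋:ℝ)) < x t ∧ x t < (⌊xR t⌋:ℝ) + 1 ∧ ⌈xR t⌉ = ⌊xR t⌋ + 1 := by
  obtain ⟨h1, h2⟩ := hb t
  have hceil : (⌈xR t⌉:ℤ) ≤ ⌊xR t⌋ + 1 := Int.ceil_le_floor_add_one _
  have h2' : x t ≤ (⌊xR t⌋:ℝ) + 1 := le_trans h2 (by exact_mod_cast hceil)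
  have hne1 : x t ≠ ((⌊xR t⌋:ℝ)) := by
    intro h; apply ht; rw [h]; norm_cast; rw [Int.floor_intCast]
  have hne2 : x t ≠ (⌊xR t⌋:ℝ) + 1 := by
    intro h; apply ht; rw [h]
    have : ((⌊xR t⌋:ℝ)) + 1 = ((⌊xR t⌋ + 1 : ℤ):ℝ) := by push_cast; ring
    rw [this, Int.floor_intCast]
  have hlt1 : ((⌊xR t⌋:ℝ)) < x t := lt_of_le_of_ne h1 (Ne.symm hne1)
  have hlt2 : x t < (⌊xR t⌋:ℝ) + 1 := lt_of_le_of_ne h2' hne2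
  have hfl : ⌊x t⌋ = ⌊xR t⌋ := Int.floor_eq_iff.2 ⟨hlt1.le, hlt2⟩
  refine ⟨hfl, hlt1, hlt2, le_antisymm hceil ?_⟩
  have : ((⌊xR t⌋:ℝ)) < ((⌈xR t⌉:ℝ)) := lt_of_lt_of_le hlt1 h2
  have h3 : ⌊xR t⌋ < ⌈xR t⌉ := by exact_mod_cast this
  omega

set_option maxHeartbeats 1000000 in
lemma exchange_step {p : Finset α → EReal} {xR : α → ℝ}
    (hsup : Supermodular p) (hint : IntegerValued p)
    (hmin : ∀ y : α → ℝ, memB p y → Wbar xR ≤ Wbar y) :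
    ∀ (M : ℕ) (x : α → ℝ), memB p x → Box xR x → Wbar x = Wbar xR →
    ∀ s : α, x s ≠ ((⌊x s⌋:ℝ)) → (∀ t, x t ≠ ((⌊x t⌋:ℝ)) → ⌊x t⌋ ≤ ⌊x s⌋) →
    ∀ W : Finset α, tightSet p x W → s ∈ W →
      (∀ Z, tightSet p x Z → s ∈ Z → W ⊆ Z) → W.card ≤ M →
    ∃ x' : α → ℝ, memB p x' ∧ Box xR x' ∧ Wbar x' = Wbar xR ∧ fracSet x' ⊂ fracSet x := by
  classical
  intro M
  induction M with
  | zero =>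
    intro x _ _ _ s _ _ W _ hsW _ hcard
    exact absurd (Finset.card_pos.2 ⟨s, hsW⟩) (by omega)
  | succ M ih =>
    intro x hx hbox hWx s hs hmax W hWt hsW hWmin hcard
    -- find a second fractional element u in W
    have hu : ∃ u ∈ W, u ≠ s ∧ x u ≠ ((⌊x u⌋:ℝ)) := by
      by_contra hcon
      push_neg at hcon
      rcases hint W with hbot | ⟨n, hn⟩
      · rw [hWt] at hbot; exact (EReal.coe_ne_bot _) hbot
      · have hWn : ((n:ℝ)) = ∑ t ∈ W, x t := by
          rw [hWt] at hn; exact_mod_cast hn.symm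
        have hsplit : ∑ t ∈ W, x t = x s + ∑ t ∈ W.erase s, x t :=
          (Finset.add_sum_erase W x hsW).symm
        have herase : ∑ t ∈ W.erase s, x t = ((∑ t ∈ W.erase s, ⌊x t⌋ : ℤ):ℝ) := by
          push_cast
          exact Finset.sum_congr rfl
            (fun t ht => hcon t (mem_of_mem_erase ht) (ne_of_mem_erase ht))
        have hxs : x s = ((n - ∑ t ∈ W.erase s, ⌊x t⌋ : ℤ):ℝ) := by
          push_cast
          push_cast at herase
          linarith [hWn, hsplit]
        apply hs
        rw [hxs, Int.floor_intCast]
      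
    obtain ⟨u, huW, hus, hufrac⟩ := hu
    obtain ⟨hflu, hltu1, hltu2, hceilu⟩ := box_frac hbox hufrac
    obtain ⟨hfls, hlts1, hlts2, hceils⟩ := box_frac hbox hs
    set ms : ℤ := ⌊x s⌋ with hms
    set mu : ℤ := ⌊x u⌋ with hmu
    set gs : ℝ := x s - (ms:ℝ) with hgs
    set gu : ℝ := (mu:ℝ) + 1 - x u with hgu
    have hgs0 : 0 < gs := by rw [hgs, hfls]; linarith
    have hgs1 : gs < 1 := by rw [hgs, hfls]; linarith
    have hgu0 : 0 < gu := by rw [hgu, hflu]; linarith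
    have hgu1 : gu < 1 := by rw [hgu, hflu]; linarith
    -- capacity
    set slack : Finset α → ℝ := fun Z => (∑ t ∈ Z, x t) - (p Z).toReal with hslack
    set G : Finset (Finset α) :=
      univ.powerset.filter (fun Z => s ∈ Z ∧ u ∉ Z ∧ p Z ≠ ⊥) with hG
    set dcap : ℝ := if h : G.Nonempty then G.inf' h slack else 2 with hdcap
    have hslackpos : ∀ Z ∈ G, 0 < slack Z := by
      intro Z hZ
      simp only [hG, mem_filter, mem_powerset] at hZ
      obtain ⟨-, hsZ, huZ, hbZ⟩ := hZ
      obtain ⟨r, hr, hrle⟩ := pz_real hx Z hbZ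
      have hnt : r ≠ ∑ t ∈ Z, x t := by
        intro he
        exact huZ (hWmin Z (by rw [tightSet, hr, he]) hsZ huW)
      have hs2 : slack Z = ∑ t ∈ Z, x t - r := by
        simp only [hslack, hr, EReal.toReal_coe]
      rw [hs2]
      have := lt_of_le_of_ne hrle hnt
      linarith
    have hdcap0 : 0 < dcap := by
      rw [hdcap]
      split
      · next h => exact (Finset.lt_inf'_iff h).2 (fun Z hZ => hslackpos Z hZ)
      · norm_num
    set δ : ℝ := min gs (min gu dcap) with hδ
    have hδ0 : 0 < δ := lt_min hgs0 (lt_min hgu0 hdcap0)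
    have hδgs : δ ≤ gs := min_le_left _ _
    have hδgu : δ ≤ gu := le_trans (min_le_right _ _) (min_le_left _ _)
    have hδcap : δ ≤ dcap := le_trans (min_le_right _ _) (min_le_right _ _)
    -- the moved point
    set x' : α → ℝ := fun t => x t + (if t = u then δ else 0) - (if t = s then δ else 0)
      with hx'def
    have hx's : x' s = x s - δ := by simp [hx'def, Ne.symm hus]
    have hx'u : x' u = x u + δ := by simp [hx'def, hus]
    have hx'o : ∀ t, t ≠ u → t ≠ s → x' t = x t := by
      intro t h1 h2; simp [hx'def, h1, h2]
    have hsum' : ∀ Z : Finset α, ∑ t ∈ Z, x' t =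
        ∑ t ∈ Z, x t + (if u ∈ Z then δ else 0) - (if s ∈ Z then δ else 0) := by
      intro Z
      rw [hx'def]
      rw [Finset.sum_sub_distrib, Finset.sum_add_distrib]
      rw [Finset.sum_ite_eq' Z u (fun _ => δ), Finset.sum_ite_eq' Z s (fun _ => δ)]
    -- membership in B
    have hx' : memB p x' := by
      constructor
      · rw [hsum' univ, if_pos (mem_univ u), if_pos (mem_univ s)]
        rw [show ∑ t, x t + δ - δ = ∑ t, x t by ring]
        exact hx.1
      · intro Z
        rw [hsum' Z]
        by_cases hsZ : s ∈ Z <;> by_cases huZ : u ∈ Z <;>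
          simp only [hsZ, huZ, if_pos, if_neg, if_true, if_false]
        · rw [show ∑ t ∈ Z, x t + δ - δ = ∑ t ∈ Z, x t by ring]; exact hx.2 Z
        · -- s ∈ Z, u ∉ Z : use capacity
          rw [show ∑ t ∈ Z, x t + 0 - δ = ∑ t ∈ Z, x t - δ by ring]
          by_cases hbZ : p Z = ⊥
          · rw [hbZ]; exact bot_le
          · have hZG : Z ∈ G := by
              simp only [hG, mem_filter, mem_powerset]
              exact ⟨subset_univ Z, hsZ, huZ, hbZ⟩
            have hGne : G.Nonempty := ⟨Z, hZG⟩
            have hdle : dcap ≤ slack Z := by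
              rw [hdcap, dif_pos hGne]; exact Finset.inf'_le slack hZG
            obtain ⟨r, hr, hrle⟩ := pz_real hx Z hbZ
            rw [hr]
            rw [EReal.coe_le_coe_iff]
            have hs2 : slack Z = ∑ t ∈ Z, x t - r := by
              simp only [hslack, hr, EReal.toReal_coe]
            rw [hs2] at hdle
            linarith
        · rw [show ∑ t ∈ Z, x t + δ - 0 = ∑ t ∈ Z, x t + δ by ring]
          exact le_trans (hx.2 Z) (EReal.coe_le_coe_iff.2 (by linarith))
        · rw [show ∑ t ∈ Z, x t + 0 - 0 = ∑ t ∈ Z, x t by ring]; exact hx.2 Z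
    -- Wbar change
    have hWchange : Wbar x' = Wbar x + ((2*(mu:ℝ)+1)*δ - (2*(ms:ℝ)+1)*δ) := by
      have hterm : ∀ t, phibar (x' t) = phibar (x t) +
          ((if t = u then (2*(mu:ℝ)+1)*δ else 0) - (if t = s then (2*(ms:ℝ)+1)*δ else 0)) := by
        intro t
        by_cases h2 : t = u
        · subst h2
          rw [if_pos rfl, if_neg hus, hx'u]
          rw [phibar_affine mu (x t + δ) (by rw [hflu]; linarith)
            (by have h5 := hδgu; rw [hgu] at h5; linarith),
            phibar_affine mu (x t) (by rw [hflu]; linarith) (by rw [hflu]; linarith)]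
          ring
        · by_cases h1 : t = s
          · subst h1
            rw [if_neg h2, if_pos rfl, hx's]
            rw [phibar_affine ms (x t - δ) (by have h5 := hδgs; rw [hgs] at h5; linarith)
              (by rw [hfls]; linarith),
              phibar_affine ms (x t) (by rw [hfls]; linarith) (by rw [hfls]; linarith)]
            ring
          · rw [if_neg h2, if_neg h1, hx'o t h2 h1]; ring
      unfold Wbar
      rw [Finset.sum_congr rfl (fun t _ => hterm t)]
      rw [Finset.sum_add_distrib, Finset.sum_sub_distrib]
      rw [Finset.sum_ite_eq' univ u (fun _ => (2*(mu:ℝ)+1)*δ),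
        Finset.sum_ite_eq' univ s (fun _ => (2*(ms:ℝ)+1)*δ)]
      simp
    -- optimality forces mu = ms
    have hmusm : mu = ms := by
      have h1 : Wbar x ≤ Wbar x' := by rw [hWx]; exact hmin x' hx'
      have h2 : mu ≤ ms := hmax u hufrac
      have h3 : (0:ℝ) ≤ (2*(mu:ℝ)+1)*δ - (2*(ms:ℝ)+1)*δ := by linarith [hWchange]
      have h4 : (ms:ℝ) ≤ (mu:ℝ) := by nlinarith
      have h5 : ms ≤ mu := by exact_mod_cast h4
      omega
    have hWeq : Wbar x' = Wbar xR := by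
      rw [hWchange, hmusm, hWx]; ring
    -- box
    have hbox' : Box xR x' := by
      intro t
      by_cases h1 : t = s
      · subst h1
        rw [hx's]
        constructor
        · rw [← hfls]; rw [hms] at hgs ⊢; linarith [hδgs]
        · have := (hbox t).2; linarith
      · by_cases h2 : t = u
        · subst h2
          rw [hx'u]
          constructor
          · have := (hbox t).1; linarith
          · have h3 : ((⌈xR t⌉:ℝ)) = (mu:ℝ) + 1 := by
              rw [hflu, hceilu]; push_cast; ring
            rw [h3]; linarith [hδgu]
        · rw [hx'o t h2 h1]; exact hbox t
    -- fracSet inclusion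
    have hsub : fracSet x' ⊆ fracSet x := by
      intro t ht
      simp only [fracSet, mem_filter, mem_univ, true_and] at ht ⊢
      by_cases h1 : t = s
      · subst h1; exact hs
      · by_cases h2 : t = u
        · subst h2; exact hufrac
        · rw [hx'o t h2 h1] at ht; exact ht
    -- case analysis on which bound binds
    rcases le_or_gt gs (min gu dcap) with hA | hA
    · -- δ = gs : s becomes integral
      have hδeq : δ = gs := min_eq_left hA
      refine ⟨x', hx', hbox', hWeq, hsub, ?_⟩
      intro hss
      have : s ∈ fracSet x' := hss (by simp only [fracSet, mem_filter, mem_univ, true_and]; exact hs)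
      simp only [fracSet, mem_filter, mem_univ, true_and] at this
      apply this
      rw [hx's, hδeq, hgs]
      rw [show x s - (x s - (ms:ℝ)) = ((ms:ℤ):ℝ) by push_cast; ring]
      rw [Int.floor_intCast]
    · rcases le_or_gt gu dcap with hB | hB
      · -- δ = gu : u becomes integral
        have hδeq : δ = gu := by
          rw [hδ, min_eq_right (le_of_lt hA), min_eq_left hB]
        refine ⟨x', hx', hbox', hWeq, hsub, ?_⟩
        intro hss
        have : u ∈ fracSet x' := hss (by simp only [fracSet, mem_filter, mem_univ, true_and]; exact hufrac)
        simp only [fracSet, mem_filter, mem_univ, true_and] at this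
        apply this
        rw [hx'u, hδeq, hgu]
        rw [show x u + ((mu:ℝ) + 1 - x u) = ((mu + 1:ℤ):ℝ) by push_cast; ring]
        rw [Int.floor_intCast]
      · -- δ = dcap < gs, gu : a new tight set appears, recurse
        have hmin2 : min gu dcap = dcap := min_eq_right hB.le
        have hAd : dcap < gs := by rw [hmin2] at hA; exact hA
        have hδeq : δ = dcap := by rw [hδ, hmin2]; exact min_eq_right hAd.le
        have hδgs' : δ < gs := by rw [hδeq]; exact hAd
        have hδgu' : δ < gu := by rw [hδeq]; exact hB
        have hGne : G.Nonempty := by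
          by_contra hcon
          rw [hdcap, dif_neg hcon] at hδeq
          have := hδgu'
          rw [hδeq] at this
          linarith
        obtain ⟨Z₀, hZ₀G, hZ₀eq⟩ := Finset.exists_mem_eq_inf' hGne slack
        have hdcap_eq : dcap = slack Z₀ := by rw [hdcap, dif_pos hGne]; exact hZ₀eq
        have hZ₀G' := hZ₀G
        simp only [hG, mem_filter, mem_powerset] at hZ₀G'
        obtain ⟨-, hsZ0, huZ0, hbZ0⟩ := hZ₀G'
        obtain ⟨r, hr, -⟩ := pz_real hx Z₀ hbZ0
        have hslackZ : slack Z₀ = ∑ t ∈ Z₀, x t - r := by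
          simp only [hslack, hr, EReal.toReal_coe]
        have h1 : ∑ t ∈ Z₀, x' t = r := by
          rw [hsum' Z₀, if_neg huZ0, if_pos hsZ0, hδeq, hdcap_eq, hslackZ]; ring
        have htZ0 : tightSet p x' Z₀ := by unfold tightSet; rw [h1]; exact hr
        have htW : tightSet p x' W := by
          unfold tightSet
          rw [hsum' W, if_pos huW, if_pos hsW,
            show ∑ t ∈ W, x t + δ - δ = ∑ t ∈ W, x t by ring]
          exact hWt
        obtain ⟨W', hW't, hsW', hW'min⟩ := exists_mts hsup hx' s
        have hW'W : W' ⊆ W := hW'min W htW hsW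
        have hW'Z0 : W' ⊆ Z₀ := hW'min Z₀ htZ0 hsZ0
        have huW' : u ∉ W' := fun h => huZ0 (hW'Z0 h)
        have hcard' : W'.card ≤ M := by
          have hlt := Finset.card_lt_card
            ((Finset.ssubset_iff_of_subset hW'W).2 ⟨u, huW, huW'⟩)
          omega
        have hb1 : (ms:ℝ) < x s - δ := by
          have h5 := hδgs'; rw [hgs] at h5; linarith
        have hb2 : x s - δ < (ms:ℝ) + 1 := by rw [hfls]; linarith [hδ0, hlts2]
        have hx'sfl : ⌊x' s⌋ = ms := by
          rw [hx's]; exact Int.floor_eq_iff.2 ⟨hb1.le, hb2⟩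
        have hfrac's : x' s ≠ ((⌊x' s⌋:ℝ)) := by
          rw [hx'sfl, hx's]; exact ne_of_gt hb1
        have hb3 : (mu:ℝ) < x u + δ := by rw [hflu]; linarith [hltu1, hδ0]
        have hb4 : x u + δ < (mu:ℝ) + 1 := by
          have h5 := hδgu'; rw [hgu] at h5; linarith
        have hx'ufl : ⌊x' u⌋ = mu := by
          rw [hx'u]; exact Int.floor_eq_iff.2 ⟨hb3.le, hb4⟩
        have hmax' : ∀ t, x' t ≠ ((⌊x' t⌋:ℝ)) → ⌊x' t⌋ ≤ ⌊x' s⌋ := by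
          intro t ht
          rw [hx'sfl]
          by_cases h2 : t = u
          · subst h2; rw [hx'ufl]; omega
          · by_cases h3 : t = s
            · subst h3; rw [hx'sfl]
            · rw [hx'o t h2 h3] at ht ⊢; exact hmax t ht
        obtain ⟨x'', ha, hb'', hc, hd⟩ :=
          ih x' hx' hbox' hWeq s hfrac's hmax' W' hW't hsW' hW'min hcard'
        exact ⟨x'', ha, hb'', hc, _root_.ssubset_of_ssubset_of_subset hd hsub⟩

lemma round_to_integral {p : Finset α → EReal} {xR : α → ℝ}
    (hsup : Supermodular p) (hint : IntegerValued p)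
    (hmin : ∀ y : α → ℝ, memB p y → Wbar xR ≤ Wbar y) :
    ∀ (n : ℕ) (x : α → ℝ), memB p x → Box xR x → Wbar x = Wbar xR →
      (fracSet x).card ≤ n →
    ∃ z : α → ℤ, memBZ p z ∧ (∀ s, ⌊xR s⌋ ≤ z s ∧ z s ≤ ⌈xR s⌉) ∧
      Wbar (fun s => ((z s : ℝ))) = Wbar xR := by
  intro n
  induction n with
  | zero =>
    intro x hx hbox hWx hcard
    have hempty : fracSet x = ∅ := Finset.card_eq_zero.1 (by omega)
    have hall : ∀ t, x t = ((⌊x t⌋:ℝ)) := by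
      intro t
      by_contra h'
      have : t ∈ fracSet x := by
        simp only [fracSet, mem_filter, mem_univ, true_and]; exact h'
      rw [hempty] at this
      exact absurd this (Finset.notMem_empty t)
    refine ⟨fun t => ⌊x t⌋, ⟨?_, ?_⟩, ?_, ?_⟩
    · rw [show ((((∑ s, ⌊x s⌋ : ℤ):ℝ)) : EReal) = ((∑ s, x s : ℝ) : EReal) by
        norm_cast; push_cast; exact (Finset.sum_congr rfl fun t _ => (hall t).symm)]
      exact hx.1
    · intro Z
      rw [show ((((∑ s ∈ Z, ⌊x s⌋ : ℤ):ℝ)) : EReal) = ((∑ s ∈ Z, x s : ℝ) : EReal) by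
        norm_cast; push_cast; exact (Finset.sum_congr rfl fun t _ => (hall t).symm)]
      exact hx.2 Z
    · intro t
      constructor
      · have h1 := (hbox t).1; rw [hall t] at h1; exact_mod_cast h1
      · have h2 := (hbox t).2; rw [hall t] at h2; exact_mod_cast h2
    · rw [← hWx]
      unfold Wbar
      exact Finset.sum_congr rfl fun t _ => by simp only []; rw [← hall t]
  | succ n ihn =>
    intro x hx hbox hWx hcard
    by_cases hne : (fracSet x).Nonempty
    · obtain ⟨s, hsmem, hsmax⟩ := Finset.exists_max_image (fracSet x) (fun t => ⌊x t⌋) hne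
      have hsfrac : x s ≠ ((⌊x s⌋:ℝ)) := by
        simpa only [fracSet, mem_filter, mem_univ, true_and] using hsmem
      have hmax' : ∀ t, x t ≠ ((⌊x t⌋:ℝ)) → ⌊x t⌋ ≤ ⌊x s⌋ := by
        intro t ht
        exact hsmax t (by simp only [fracSet, mem_filter, mem_univ, true_and]; exact ht)
      obtain ⟨W, hWt, hsW, hWmin⟩ := exists_mts hsup hx s
      obtain ⟨x', hx', hbox', hWeq', hss⟩ :=
        exchange_step hsup hint hmin W.card x hx hbox hWx s hsfrac hmax'
          W hWt hsW hWmin le_rfl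
      have hcard' : (fracSet x').card ≤ n := by
        have := Finset.card_lt_card hss
        omega
      exact ihn x' hx' hbox' hWeq' hcard'
    · rw [Finset.not_nonempty_iff_eq_empty] at hne
      have hall : ∀ t, x t = ((⌊x t⌋:ℝ)) := by
        intro t
        by_contra h'
        have : t ∈ fracSet x := by
          simp only [fracSet, mem_filter, mem_univ, true_and]; exact h'
        rw [hne] at this
        exact absurd this (Finset.notMem_empty t)
      refine ⟨fun t => ⌊x t⌋, ⟨?_, ?_⟩, ?_, ?_⟩
      · rw [show ((((∑ s, ⌊x s⌋ : ℤ):ℝ)) : EReal) = ((∑ s, x s : ℝ) : EReal) by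
          norm_cast; push_cast; exact (Finset.sum_congr rfl fun t _ => (hall t).symm)]
        exact hx.1
      · intro Z
        rw [show ((((∑ s ∈ Z, ⌊x s⌋ : ℤ):ℝ)) : EReal) = ((∑ s ∈ Z, x s : ℝ) : EReal) by
          norm_cast; push_cast; exact (Finset.sum_congr rfl fun t _ => (hall t).symm)]
        exact hx.2 Z
      · intro t
        constructor
        · have h1 := (hbox t).1; rw [hall t] at h1; exact_mod_cast h1
        · have h2 := (hbox t).2; rw [hall t] at h2; exact_mod_cast h2
      · rw [← hWx]
        unfold Wbar
        exact Finset.sum_congr rfl fun t _ => by simp only []; rw [← hall t]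


/-- The minimum of `W̄` over `B` equals the minimum square-sum over `B ∩ ℤ^S`;
moreover any minimizer `x_ℝ` of `W̄` over `B` admits an integral minimizer `x_ℤ`
of `W̄` over `B` with `⌊x_ℝ⌋ ≤ x_ℤ ≤ ⌈x_ℝ⌉`. -/
theorem Wbar_min_eq_integral_square_sum_min (p : Finset α → EReal) (hp0 : p ∅ = 0)
    (hfin : p (Finset.univ : Finset α) ≠ ⊥) (hsup : Supermodular p)
    (hint : IntegerValued p) (xR : α → ℝ) (hxR : memB p xR)
    (hmin : ∀ y : α → ℝ, memB p y → Wbar xR ≤ Wbar y) :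
    (∀ z : α → ℤ, memBZ p z → Wbar xR ≤ ∑ s, ((z s : ℝ)) ^ 2) ∧
    ∃ xZ : α → ℤ, memBZ p xZ ∧
      (∀ s : α, ⌊xR s⌋ ≤ xZ s ∧ xZ s ≤ ⌈xR s⌉) ∧
      (∑ s, ((xZ s : ℝ)) ^ 2) = Wbar xR ∧
      (∀ y : α → ℝ, memB p y → Wbar (fun s => (xZ s : ℝ)) ≤ Wbar y) := by
  have memcast : ∀ z : α → ℤ, memBZ p z → memB p (fun s => ((z s : ℝ))) := by
    intro z hz
    constructor
    · rw [show ((∑ s, ((z s : ℝ)) : ℝ) : EReal) = ((((∑ s, z s : ℤ) : ℝ)) : EReal) by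
        norm_cast]
      exact hz.1
    · intro Z
      rw [show ((∑ s ∈ Z, ((z s : ℝ)) : ℝ) : EReal) = ((((∑ s ∈ Z, z s : ℤ) : ℝ)) : EReal) by
        norm_cast]
      exact hz.2 Z
  have Wcast : ∀ z : α → ℤ, Wbar (fun s => ((z s : ℝ))) = ∑ s, ((z s : ℝ))^2 := by
    intro z
    unfold Wbar
    exact Finset.sum_congr rfl fun t _ => phibar_intCast (z t)
  constructor
  · intro z hz
    have := hmin _ (memcast z hz)
    rwa [Wcast z] at this
  · have hbox : Box xR xR := fun t => ⟨Int.floor_le _, Int.le_ceil _⟩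
    obtain ⟨z, hz, hbounds, hW⟩ := round_to_integral hsup hint hmin
      (fracSet xR).card xR hxR hbox rfl le_rfl
    refine ⟨z, hz, hbounds, ?_, ?_⟩
    · rw [← Wcast z]; exact hW
    · intro y hy
      rw [hW]; exact hmin y hy
end

section
/- The minimum norm point m_ℝ of an integral base-polyhedron B (the unique minimizer of Σ x(s)² over B) is also a minimizer over B of the piecewise-linear function W̄(x) = Σ_{s∈S} φ̄(x(s)), where φ̄ is the piecewise-linear extension of k ↦ k². -/
open Finset

variable {α : Type*} [Fintype α] [DecidableEq α]

lemma phibar_eq (a : ℝ) :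
    phibar a = (2 * (⌊a⌋ : ℝ) + 1) * a - (⌊a⌋ : ℝ) * ((⌊a⌋ : ℝ) + 1) := by
  rcases le_or_gt 0 a with h | h
  · rw [phibar, abs_of_nonneg h]
  · rw [phibar, abs_of_neg h]
    rcases eq_or_ne (Int.fract a) 0 with hf | hf
    · have ha : a = (⌊a⌋ : ℝ) := by
        have := Int.fract_add_floor a
        rw [hf] at this; linarith
      have h2 : ⌊-a⌋ = -⌊a⌋ := by
        rw [ha]; rw [Int.floor_neg, Int.ceil_intCast]; simp
      rw [h2]; push_cast; linear_combination (-2 : ℝ) * ha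
    · have hfl : (⌊a⌋ : ℝ) < a := by
        rcases lt_or_eq_of_le (Int.floor_le a) with h1 | h1
        · exact h1
        · exact absurd (by rw [Int.fract, ← h1]; simp) hf
      have hclt : ⌊a⌋ < ⌈a⌉ := by
        have := Int.le_ceil a
        exact_mod_cast hfl.trans_le this
      have hceil : ⌈a⌉ = ⌊a⌋ + 1 := le_antisymm (Int.ceil_le_floor_add_one a) (by omega)
      have h2 : ⌊-a⌋ = -⌊a⌋ - 1 := by rw [Int.floor_neg, hceil]; ring
      rw [h2]; push_cast; ring

lemma phibar_line_le (k : ℤ) (b : ℝ) :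
    (2 * (k : ℝ) + 1) * b - (k : ℝ) * ((k : ℝ) + 1) ≤ phibar b := by
  rw [phibar_eq b]
  set n := ⌊b⌋ with hn
  have hb1 : (n : ℝ) ≤ b := Int.floor_le b
  have hb2 : b < (n : ℝ) + 1 := Int.lt_floor_add_one b
  rcases lt_trichotomy k n with h | h | h
  · have : (k : ℝ) ≤ (n : ℝ) - 1 := by exact_mod_cast Int.le_sub_one_of_lt h
    nlinarith
  · subst h; nlinarith
  · have : (n : ℝ) + 1 ≤ (k : ℝ) := by exact_mod_cast h
    nlinarith

lemma phibar_subgrad (a b : ℝ) :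
    phibar a + (2 * (⌊a⌋ : ℝ) + 1) * (b - a) ≤ phibar b := by
  have := phibar_line_le ⌊a⌋ b
  rw [phibar_eq a]
  linarith

/-- The minimum norm point of an integral base-polyhedron (the unique square-sum
minimizer over `B`) is also a minimizer of the piecewise-linear function `W̄` over `B`. -/
theorem min_norm_point_minimizes_Wbar (p : Finset α → EReal) (hp0 : p ∅ = 0)
    (hfin : p (Finset.univ : Finset α) ≠ ⊥) (hsup : Supermodular p)
    (hint : IntegerValued p) (mR : α → ℝ) (hmR : memB p mR)
    (hsq : ∀ y : α → ℝ, memB p y → (∑ s, (mR s) ^ 2) ≤ ∑ s, (y s) ^ 2) :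
    ∀ y : α → ℝ, memB p y → Wbar mR ≤ Wbar y := by
  classical
  -- Tight sets
  set Tight : Finset α → Prop := fun Z => p Z = ((∑ u ∈ Z, mR u : ℝ) : EReal) with hTight
  have hTuniv : Tight Finset.univ := hmR.1.symm
  have hTempty : Tight (∅ : Finset α) := by
    simp only [hTight, Finset.sum_empty, hp0]; norm_num
  have hne_bot : ∀ Z : Finset α, Tight Z → ∃ r : ℝ, p Z = (r : EReal) := by
    intro Z hZ; exact ⟨_, hZ⟩
  -- closure of tight sets under ∩ and ∪
  have hTclose : ∀ X Y : Finset α, Tight X → Tight Y → Tight (X ∩ Y) ∧ Tight (X ∪ Y) := by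
    intro X Y hX hY
    have h1 : p (X ∩ Y) ≤ ((∑ u ∈ X ∩ Y, mR u : ℝ) : EReal) := hmR.2 _
    have h2 : p (X ∪ Y) ≤ ((∑ u ∈ X ∪ Y, mR u : ℝ) : EReal) := hmR.2 _
    have hsum : ((∑ u ∈ X ∩ Y, mR u + ∑ u ∈ X ∪ Y, mR u : ℝ) : EReal)
        ≤ p (X ∩ Y) + p (X ∪ Y) := by
      have := hsup X Y
      rw [hX, hY, ← EReal.coe_add] at this
      have heq : (∑ u ∈ X, mR u) + (∑ u ∈ Y, mR u)
          = (∑ u ∈ X ∩ Y, mR u) + (∑ u ∈ X ∪ Y, mR u) := by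
        rw [add_comm (∑ u ∈ X ∩ Y, mR u), Finset.sum_union_inter]
      rw [heq] at this
      exact this
    have hib : p (X ∩ Y) ≠ ⊥ := by
      intro hb
      rw [hb, EReal.bot_add] at hsum
      exact absurd hsum (by simp)
    have hub : p (X ∪ Y) ≠ ⊥ := by
      intro hb
      rw [hb, EReal.add_bot] at hsum
      exact absurd hsum (by simp)
    rcases hint (X ∩ Y) with hb | ⟨ni, hni⟩; · exact absurd hb hib
    rcases hint (X ∪ Y) with hb | ⟨nu, hnu⟩; · exact absurd hb hub
    rw [hni, hnu, ← EReal.coe_add, EReal.coe_le_coe_iff] at hsum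
    rw [hni, EReal.coe_le_coe_iff] at h1
    rw [hnu, EReal.coe_le_coe_iff] at h2
    constructor
    · show p (X ∩ Y) = ((∑ u ∈ X ∩ Y, mR u : ℝ) : EReal)
      rw [hni]; exact EReal.coe_eq_coe_iff.mpr (by linarith)
    · show p (X ∪ Y) = ((∑ u ∈ X ∪ Y, mR u : ℝ) : EReal)
      rw [hnu]; exact EReal.coe_eq_coe_iff.mpr (by linarith)
  -- Lemma A : separation of unequal components by tight sets
  have hA : ∀ s t : α, mR t < mR s → ∃ Z : Finset α, Tight Z ∧ s ∈ Z ∧ t ∉ Z := by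
    intro s t hlt
    by_contra hcon
    push_neg at hcon
    have hst : s ≠ t := by intro h; rw [h] at hlt; exact lt_irrefl _ hlt
    -- slack
    have hslack : ∀ Z : Finset α, ∃ e : ℝ, 0 < e ∧
        ((s ∈ Z ∧ t ∉ Z) → p Z ≤ (((∑ u ∈ Z, mR u) - e : ℝ) : EReal)) := by
      intro Z
      by_cases hZ : s ∈ Z ∧ t ∉ Z
      · have hnt : ¬ Tight Z := fun h => hZ.2 (hcon Z h hZ.1)
        rcases hint Z with hb | ⟨n, hn⟩
        · exact ⟨1, one_pos, fun _ => by rw [hb]; exact bot_le⟩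
        · have hle : (n : ℝ) ≤ ∑ u ∈ Z, mR u := by
            have := hmR.2 Z; rw [hn, EReal.coe_le_coe_iff] at this; exact this
          have hne : (n : ℝ) ≠ ∑ u ∈ Z, mR u := by
            intro h; apply hnt
            show p Z = ((∑ u ∈ Z, mR u : ℝ) : EReal)
            rw [hn, h]
          refine ⟨(∑ u ∈ Z, mR u) - n, by cases lt_or_eq_of_le hle with
            | inl h => linarith | inr h => exact absurd h hne, fun _ => ?_⟩
          rw [hn, EReal.coe_le_coe_iff]; linarith
      · exact ⟨1, one_pos, fun h => absurd h hZ⟩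
    choose g hgpos hgle using hslack
    have hune : (Finset.univ : Finset (Finset α)).Nonempty := ⟨∅, Finset.mem_univ _⟩
    set ε1 : ℝ := Finset.univ.inf' hune g with hε1
    have hε1pos : 0 < ε1 := by
      rw [hε1, Finset.lt_inf'_iff]
      exact fun Z _ => hgpos Z
    have key : ∀ δ : ℝ, 0 < δ → mR s - mR t ≤ δ := by
      intro δ hδ
      set ε : ℝ := min ε1 δ with hεdef
      have hεpos : 0 < ε := lt_min hε1pos hδ
      have hεle1 : ∀ Z : Finset α, ε ≤ g Z := fun Z =>
        le_trans (min_le_left _ _) (Finset.inf'_le g (Finset.mem_univ Z))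
      set yε : α → ℝ := fun u =>
        mR u + ε * ((if u = t then 1 else 0) - (if u = s then 1 else 0)) with hyε
      have hsumZ : ∀ Z : Finset α, ∑ u ∈ Z, yε u
          = (∑ u ∈ Z, mR u) + ε * ((if t ∈ Z then 1 else 0) - (if s ∈ Z then 1 else 0)) := by
        intro Z
        rw [hyε]
        simp only [Finset.sum_add_distrib, ← Finset.mul_sum, Finset.sum_sub_distrib]
        rw [Finset.sum_ite_eq' Z t (fun _ => (1:ℝ)), Finset.sum_ite_eq' Z s (fun _ => (1:ℝ))]
      have hmem : memB p yε := by
        constructor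
        · rw [hsumZ Finset.univ]
          simp only [Finset.mem_univ, if_pos]
          rw [sub_self, mul_zero, add_zero]
          exact hmR.1
        · intro Z
          rw [hsumZ Z]
          by_cases hsZ : s ∈ Z <;> by_cases htZ : t ∈ Z <;>
            simp only [hsZ, htZ, if_pos, if_neg, if_true, if_false]
          · rw [sub_self, mul_zero, add_zero]; exact hmR.2 Z
          · -- s ∈ Z, t ∉ Z
            have := hgle Z ⟨hsZ, htZ⟩
            refine le_trans this ?_
            rw [EReal.coe_le_coe_iff]
            have := hεle1 Z
            ring_nf
            nlinarith [hεle1 Z]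
          · -- s ∉ Z, t ∈ Z
            refine le_trans (hmR.2 Z) ?_
            rw [EReal.coe_le_coe_iff]
            nlinarith [hεpos]
          · rw [sub_self, mul_zero, add_zero]; exact hmR.2 Z
      have hsq' := hsq yε hmem
      have hdiff : ∀ u : α, (yε u) ^ 2 - (mR u) ^ 2
          = (if u = t then 2 * ε * mR t + ε ^ 2 else 0)
            + (if u = s then -2 * ε * mR s + ε ^ 2 else 0) := by
        intro u
        by_cases hut : u = t
        · have hus : u ≠ s := by intro h; subst h; exact hst hut
          subst hut
          simp [hyε, hus]
          ring
        · by_cases hus : u = s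
          · subst hus
            simp [hyε, hut]
            ring
          · simp only [hyε, if_neg hut, if_neg hus]
            ring
      have hsum2 : (∑ u, (yε u) ^ 2) - (∑ u, (mR u) ^ 2)
          = 2 * ε * (mR t - mR s) + 2 * ε ^ 2 := by
        rw [← Finset.sum_sub_distrib]
        rw [Finset.sum_congr rfl (fun u _ => hdiff u)]
        rw [Finset.sum_add_distrib,
          Finset.sum_ite_eq' Finset.univ t (fun _ => 2 * ε * mR t + ε ^ 2),
          Finset.sum_ite_eq' Finset.univ s (fun _ => -2 * ε * mR s + ε ^ 2)]
        simp only [Finset.mem_univ, if_pos]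
        ring
      have h0 : 0 ≤ 2 * ε * (mR t - mR s) + 2 * ε ^ 2 := by linarith
      have : mR s - mR t ≤ ε := by nlinarith
      exact le_trans this (min_le_right _ _)
    have := key ((mR s - mR t) / 2) (by linarith)
    linarith
  -- tightness of level sets
  have hAk : ∀ k : ℤ, Tight (Finset.univ.filter (fun u => (k : ℝ) ≤ mR u)) := by
    intro k
    set A := Finset.univ.filter (fun u => (k : ℝ) ≤ mR u) with hA_def
    -- step 1 : each s ∈ A is covered by a tight set inside A
    have hZs : ∀ s ∈ A, ∃ Z : Finset α, Tight Z ∧ s ∈ Z ∧ Z ⊆ A := by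
      intro s hs
      have hs' : (k : ℝ) ≤ mR s := (Finset.mem_filter.mp hs).2
      have main : ∀ T : Finset α, (∀ t ∈ T, t ∉ A) →
          ∃ Z : Finset α, Tight Z ∧ s ∈ Z ∧ ∀ t ∈ T, t ∉ Z := by
        intro T
        induction T using Finset.induction_on with
        | empty => exact fun _ => ⟨Finset.univ, hTuniv, Finset.mem_univ s, by simp⟩
        | @insert a T ha ih =>
          intro hT
          obtain ⟨Z, hZt, hZs, hZT⟩ := ih (fun t ht => hT t (Finset.mem_insert_of_mem ht))
          have haA : a ∉ A := hT a (Finset.mem_insert_self a T)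
          have hlt : mR a < mR s := by
            have : ¬ (k : ℝ) ≤ mR a := by
              intro h; exact haA (Finset.mem_filter.mpr ⟨Finset.mem_univ a, h⟩)
            push_neg at this
            linarith
          obtain ⟨Z', hZ't, hsZ', haZ'⟩ := hA s a hlt
          refine ⟨Z ∩ Z', (hTclose Z Z' hZt hZ't).1, Finset.mem_inter.mpr ⟨hZs, hsZ'⟩, ?_⟩
          intro t ht htZ
          rcases Finset.mem_insert.mp ht with h | h
          · exact haZ' (h ▸ (Finset.mem_inter.mp htZ).2)
          · exact hZT t h (Finset.mem_inter.mp htZ).1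
      obtain ⟨Z, hZt, hZs, hZT⟩ := main (Finset.univ.filter (fun t => t ∉ A))
        (fun t ht => (Finset.mem_filter.mp ht).2)
      refine ⟨Z, hZt, hZs, ?_⟩
      intro u hu
      by_contra huA
      exact hZT u (Finset.mem_filter.mpr ⟨Finset.mem_univ u, huA⟩) hu
    -- step 2 : union
    have main2 : ∀ T : Finset α, T ⊆ A → ∃ W : Finset α, Tight W ∧ T ⊆ W ∧ W ⊆ A := by
      intro T
      induction T using Finset.induction_on with
      | empty => exact fun _ => ⟨∅, hTempty, Finset.Subset.refl _, Finset.empty_subset _⟩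
      | @insert a T ha ih =>
        intro hT
        obtain ⟨W, hWt, hTW, hWA⟩ := ih (fun t ht => hT (Finset.mem_insert_of_mem ht))
        obtain ⟨Z, hZt, haZ, hZA⟩ := hZs a (hT (Finset.mem_insert_self a T))
        refine ⟨W ∪ Z, (hTclose W Z hWt hZt).2, ?_, Finset.union_subset hWA hZA⟩
        intro t ht
        rcases Finset.mem_insert.mp ht with h | h
        · exact Finset.mem_union_right _ (h ▸ haZ)
        · exact Finset.mem_union_left _ (hTW h)
    obtain ⟨W, hWt, hAW, hWA⟩ := main2 A (Finset.Subset.refl A)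
    rwa [Finset.Subset.antisymm hWA hAW] at hWt
  -- conclusion
  intro y hy
  have hsumeq : ∑ u, y u = ∑ u, mR u := by
    have h1 := hy.1
    have h2 := hmR.1
    rw [← h2] at h1
    exact EReal.coe_eq_coe_iff.mp h1
  have hineq : ∀ k : ℤ, ∑ u ∈ Finset.univ.filter (fun u => (k : ℝ) ≤ mR u), mR u
      ≤ ∑ u ∈ Finset.univ.filter (fun u => (k : ℝ) ≤ mR u), y u := by
    intro k
    have h1 := hy.2 (Finset.univ.filter (fun u => (k : ℝ) ≤ mR u))
    have heqk : p (Finset.univ.filter (fun u => (k : ℝ) ≤ mR u))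
        = ((∑ u ∈ Finset.univ.filter (fun u => (k : ℝ) ≤ mR u), mR u : ℝ) : EReal) := hAk k
    rw [heqk] at h1
    exact EReal.coe_le_coe_iff.mp h1
  -- linear lower bound
  have hsub : ∀ u : α, phibar (mR u) + (2 * (⌊mR u⌋ : ℝ) + 1) * (y u - mR u) ≤ phibar (y u) :=
    fun u => phibar_subgrad (mR u) (y u)
  have hL : 0 ≤ ∑ u, (⌊mR u⌋ : ℝ) * (y u - mR u) := by
    rcases isEmpty_or_nonempty α with hα | hα
    · simp
    have hune : (Finset.univ : Finset α).Nonempty := Finset.univ_nonempty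
    set K : ℤ := Finset.univ.inf' hune (fun u => ⌊mR u⌋) with hK
    set M : ℤ := Finset.univ.sup' hune (fun u => ⌊mR u⌋) with hM
    have hKle : ∀ u : α, K ≤ ⌊mR u⌋ := fun u => Finset.inf'_le _ (Finset.mem_univ u)
    have hMle : ∀ u : α, ⌊mR u⌋ ≤ M := fun u => by
      rw [hM]; exact Finset.le_sup' (fun u => ⌊mR u⌋) (Finset.mem_univ u)
    have hfloor : ∀ u : α, (⌊mR u⌋ : ℝ)
        = (K : ℝ) + ∑ k ∈ Finset.Icc (K + 1) M, (if (k : ℝ) ≤ mR u then (1 : ℝ) else 0) := by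
      intro u
      have hiff : ∀ k ∈ Finset.Icc (K + 1) M,
          (if (k : ℝ) ≤ mR u then (1 : ℝ) else 0) = (if k ≤ ⌊mR u⌋ then (1 : ℝ) else 0) := by
        intro k _
        congr 1
        simp [Int.le_floor]
      rw [Finset.sum_congr rfl hiff, Finset.sum_boole]
      have hfilter : (Finset.Icc (K + 1) M).filter (fun k => k ≤ ⌊mR u⌋)
          = Finset.Icc (K + 1) ⌊mR u⌋ := by
        ext k
        simp only [Finset.mem_filter, Finset.mem_Icc]
        constructor
        · rintro ⟨⟨h1, _⟩, h3⟩; exact ⟨h1, h3⟩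
        · rintro ⟨h1, h2⟩; exact ⟨⟨h1, le_trans h2 (hMle u)⟩, h2⟩
      rw [hfilter]
      have hcard : ((Finset.Icc (K + 1) ⌊mR u⌋).card : ℤ) = ⌊mR u⌋ - K := by
        rw [Int.card_Icc_of_le _ _ (by have := hKle u; omega)]
        ring
      have : ((Finset.Icc (K + 1) ⌊mR u⌋).card : ℝ) = (⌊mR u⌋ : ℝ) - (K : ℝ) := by
        exact_mod_cast hcard
      rw [this]; ring
    have hrw : ∑ u, (⌊mR u⌋ : ℝ) * (y u - mR u)
        = (K : ℝ) * (∑ u, (y u - mR u))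
          + ∑ k ∈ Finset.Icc (K + 1) M,
              (∑ u ∈ Finset.univ.filter (fun u => (k : ℝ) ≤ mR u), (y u - mR u)) := by
      calc ∑ u, (⌊mR u⌋ : ℝ) * (y u - mR u)
          = ∑ u, ((K : ℝ) * (y u - mR u)
              + ∑ k ∈ Finset.Icc (K + 1) M,
                  (if (k : ℝ) ≤ mR u then (1 : ℝ) else 0) * (y u - mR u)) := by
            refine Finset.sum_congr rfl fun u _ => ?_
            rw [hfloor u, add_mul, Finset.sum_mul]
        _ = (K : ℝ) * (∑ u, (y u - mR u))
              + ∑ u, ∑ k ∈ Finset.Icc (K + 1) M,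
                  (if (k : ℝ) ≤ mR u then (1 : ℝ) else 0) * (y u - mR u) := by
            rw [Finset.sum_add_distrib, Finset.mul_sum]
        _ = (K : ℝ) * (∑ u, (y u - mR u))
              + ∑ k ∈ Finset.Icc (K + 1) M, ∑ u,
                  (if (k : ℝ) ≤ mR u then (1 : ℝ) else 0) * (y u - mR u) := by
            rw [Finset.sum_comm]
        _ = (K : ℝ) * (∑ u, (y u - mR u))
              + ∑ k ∈ Finset.Icc (K + 1) M,
                  (∑ u ∈ Finset.univ.filter (fun u => (k : ℝ) ≤ mR u), (y u - mR u)) := by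
            congr 1
            refine Finset.sum_congr rfl fun k _ => ?_
            rw [Finset.sum_filter]
            refine Finset.sum_congr rfl fun u _ => ?_
            by_cases h : (k : ℝ) ≤ mR u <;> simp [h]
    have hzero : ∑ u, (y u - mR u) = 0 := by
      rw [Finset.sum_sub_distrib, hsumeq, sub_self]
    rw [hrw, hzero, mul_zero, zero_add]
    refine Finset.sum_nonneg fun k _ => ?_
    have := hineq k
    rw [Finset.sum_sub_distrib]
    linarith
  -- assemble
  have hmain := Finset.sum_le_sum (fun u (_ : u ∈ Finset.univ) => hsub u)
  have hsplit : ∑ u, (phibar (mR u) + (2 * (⌊mR u⌋ : ℝ) + 1) * (y u - mR u))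
      = (∑ u, phibar (mR u)) + (2 * (∑ u, (⌊mR u⌋ : ℝ) * (y u - mR u)) + ∑ u, (y u - mR u)) := by
    rw [Finset.sum_add_distrib]
    congr 1
    rw [Finset.mul_sum, ← Finset.sum_add_distrib]
    refine Finset.sum_congr rfl fun u _ => ?_
    ring
  have hzero : ∑ u, (y u - mR u) = 0 := by
    rw [Finset.sum_sub_distrib, hsumeq, sub_self]
  rw [hsplit, hzero] at hmain
  show (∑ u, phibar (mR u)) ≤ ∑ u, phibar (y u)
  linarith
end

section
/- In the Fujishige-type decomposition algorithm, with a := ⌊p(S)/|S|⌋ and z ∈ B ∩ ℤ^S satisfying the relaxed exchange condition (z(s) ≤ a, z(t) ≥ a+1, z(t) ≥ z(s)+2 imply z + χ_s − χ_t ∉ B ∩ ℤ^S), the sets S₊ := ∪_{t: z(t) ≥ a+2} {s : z + χ_s − χ_t ∈ B ∩ ℤ^S} and S₋ := ∪_{s: z(s) ≤ a−1} {t : z + χ_s − χ_t ∈ B ∩ ℤ^S} satisfy S₊ ≠ S and S₋ ≠ S. -/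
open Finset

variable {α : Type*} [Fintype α] [DecidableEq α]

/-- The vector `z + χ_s − χ_t`. -/
def move (z : α → ℤ) (s t : α) : α → ℤ :=
  fun u => z u + (if u = s then 1 else 0) - (if u = t then 1 else 0)

/-- In the Fujishige-type decomposition algorithm, with `a = ⌊p(S)/|S|⌋` and `z`
satisfying the relaxed exchange condition, the sets `S₊` and `S₋` of
(\ref{basedecalgS+Z})–(\ref{basedecalgS-Z}) satisfy `S₊ ≠ S` and `S₋ ≠ S`. -/
theorem Splus_Sminus_proper [Nonempty α] (p : Finset α → EReal) (hp0 : p ∅ = 0)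
    (hsup : Supermodular p) (hint : IntegerValued p)
    (pS : ℤ) (hpS : p (Finset.univ : Finset α) = ((pS : ℝ) : EReal))
    (a : ℤ) (ha1 : a * (Fintype.card α : ℤ) ≤ pS)
    (ha2 : pS < (a + 1) * (Fintype.card α : ℤ))
    (z : α → ℤ) (hz : memBZ p z)
    (hrelax : ∀ s t : α, z s ≤ a → a + 1 ≤ z t → z s + 2 ≤ z t → ¬ memBZ p (move z s t)) :
    ({s : α | ∃ t : α, a + 2 ≤ z t ∧ memBZ p (move z s t)} ≠ Set.univ) ∧
    ({t : α | ∃ s : α, z s ≤ a - 1 ∧ memBZ p (move z s t)} ≠ Set.univ) := by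
  have hsum : (∑ s, z s) = pS := by
    have h1 := hz.1
    rw [hpS] at h1
    exact_mod_cast h1
  have hn : (Finset.univ : Finset α).card = Fintype.card α := Finset.card_univ
  constructor
  · have hex : ∃ s₀, z s₀ ≤ a := by
      by_contra h
      push_neg at h
      have hge : ∑ _s : α, (a + 1) ≤ ∑ s, z s := Finset.sum_le_sum (fun s _ => h s)
      rw [Finset.sum_const, hn, nsmul_eq_mul] at hge
      rw [hsum] at hge
      nlinarith
    obtain ⟨s₀, hs₀⟩ := hex
    intro hU
    have hmem : s₀ ∈ {s : α | ∃ t : α, a + 2 ≤ z t ∧ memBZ p (move z s t)} := by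
      rw [hU]; exact Set.mem_univ s₀
    obtain ⟨t, ht, hm⟩ := hmem
    exact hrelax s₀ t hs₀ (by linarith) (by linarith) hm
  · by_cases hex : ∃ t₀, a + 1 ≤ z t₀
    · obtain ⟨t₀, ht₀⟩ := hex
      intro hU
      have hmem : t₀ ∈ {t : α | ∃ s : α, z s ≤ a - 1 ∧ memBZ p (move z s t)} := by
        rw [hU]; exact Set.mem_univ t₀
      obtain ⟨s, hs, hm⟩ := hmem
      exact hrelax s t₀ (by linarith) ht₀ (by linarith) hm
    · push_neg at hex
      intro hU
      obtain ⟨t⟩ := ‹Nonempty α›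
      have hmem : t ∈ {t : α | ∃ s : α, z s ≤ a - 1 ∧ memBZ p (move z s t)} := by
        rw [hU]; exact Set.mem_univ t
      obtain ⟨s, hs, _⟩ := hmem
      have hlt : ∑ u, z u < ∑ _u : α, a :=
        Finset.sum_lt_sum (fun u _ => by linarith [hex u]) ⟨s, Finset.mem_univ s, by linarith⟩
      rw [Finset.sum_const, hn, nsmul_eq_mul, hsum] at hlt
      nlinarith
end

section
/- Let z* be the output of the Groenevelt-type decomposition algorithm applied to the M-convex set B ∩ ℤ^S, where in the recursive step S₊ is the largest y-tight set of a minimal integral vector y ≥ x in the supermodular polyhedron Q and S₋ = S − S₊. Then z* satisfies z*(s) ≥ a for all s ∈ S₊ and z*(s) ≤ a+1 for all s ∈ S₋, where a = ⌊p(S)/|S|⌋; consequently z* satisfies the exchange condition (z*(t) ≥ z*(s)+2 implies z* + χ_s − χ_t ∉ B ∩ ℤ^S) and hence is a decreasingly minimal element of B ∩ ℤ^S. -/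
open Finset

variable {α : Type*} [Fintype α] [DecidableEq α]

/-- The values of `x` on the subset `T`, sorted in decreasing order. -/
def sortDescOn (T : Finset α) (x : α → ℤ) : List ℤ :=
  (Multiset.sort (T.val.map x) (· ≤ ·)).reverse

/-- `w` is an integral base of the restriction of `B'(p)` to `Splus`. -/
def memRestrict (p : Finset α → EReal) (Splus : Finset α) (w : α → ℤ) : Prop :=
  ((((∑ s ∈ Splus, w s : ℤ) : ℝ)) : EReal) = p Splus ∧
    ∀ X : Finset α, X ⊆ Splus → p X ≤ ((((∑ s ∈ X, w s : ℤ) : ℝ)) : EReal)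

/-- `w` is an integral base of the contraction of `B'(p)` to `S − Splus`
(described by `p₋(X) = p(X ∪ Splus) − p(Splus)`). -/
def memContract (p : Finset α → EReal) (Splus : Finset α) (w : α → ℤ) : Prop :=
  ((((∑ s ∈ Finset.univ \ Splus, w s : ℤ) : ℝ)) : EReal) = p Finset.univ - p Splus ∧
    ∀ X : Finset α, X ⊆ Finset.univ \ Splus →
      p (X ∪ Splus) - p Splus ≤ ((((∑ s ∈ X, w s : ℤ) : ℝ)) : EReal)

namespace GroeAux

def sd (M : Multiset ℤ) : List ℤ := (Multiset.sort M (· ≤ ·)).reverse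

lemma sd_coe (M : Multiset ℤ) : ((sd M : List ℤ) : Multiset ℤ) = M := by
  rw [sd, ← Multiset.coe_reverse, List.reverse_reverse, Multiset.sort_eq]

lemma sd_sorted (M : Multiset ℤ) : List.Pairwise (· ≥ ·) (sd M) := by
  have h := Multiset.pairwise_sort M (· ≤ ·)
  rw [sd, List.pairwise_reverse]
  exact h.imp (fun hab => hab)

lemma sd_inj {A B : Multiset ℤ} (h : sd A = sd B) : A = B := by
  rw [← sd_coe A, ← sd_coe B, h]

lemma sd_nil : sd (0 : Multiset ℤ) = [] := by
  simp [sd]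

lemma sd_eq_nil {A : Multiset ℤ} (h : sd A = []) : A = 0 := by
  have := sd_coe A; rw [h] at this; simpa using this.symm

lemma sd_cons (A : Multiset ℤ) (m : ℤ) (hm : m ∈ A) (hmax : ∀ a ∈ A, a ≤ m) :
    sd A = m :: sd (A.erase m) := by
  haveI : Std.Antisymm (· ≥ · : ℤ → ℤ → Prop) := ⟨fun a b h1 h2 => le_antisymm h2 h1⟩
  refine (fun hp hs => List.Perm.eq_of_pairwise' (r := (· ≥ ·)) (sd_sorted A) hs hp) ?_ ?_
  · rw [← Multiset.coe_eq_coe, sd_coe]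
    show A = ((m :: sd (A.erase m) : List ℤ) : Multiset ℤ)
    rw [← Multiset.cons_coe, sd_coe, Multiset.cons_erase hm]
  · rw [List.pairwise_cons]
    constructor
    · intro b hb
      have : b ∈ A.erase m := by
        have := sd_coe (A.erase m)
        rw [← Multiset.mem_coe, this] at hb; exact hb
      exact hmax b (Multiset.mem_of_mem_erase this)
    · exact sd_sorted _

lemma lex_base {B : Multiset ℤ} (hB : B ≠ 0) : List.Lex (· < ·) (sd 0) (sd B) := by
  cases h : sd B with
  | nil => exact absurd (sd_eq_nil h) hB
  | cons b l => rw [sd_nil]; exact List.Lex.nil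

lemma lex_of_count (c : ℤ) :
    ∀ (n : ℕ) (A B : Multiset ℤ), A.card ≤ n →
    (∀ d : ℤ, c < d → A.count d = B.count d) →
    A.count c < B.count c →
    List.Lex (· < ·) (sd A) (sd B) := by
  intro n
  induction n with
  | zero =>
    intro A B hcard _ hc
    have hA : A = 0 := Multiset.card_eq_zero.mp (Nat.le_zero.mp hcard)
    subst hA
    exact lex_base (fun h => by simp [h] at hc)
  | succ n IH =>
    intro A B hcard hhigh hc
    have hBne : B ≠ 0 := fun h => by simp [h] at hc
    have hcB : c ∈ B := Multiset.count_pos.mp (by omega)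
    by_cases hA : A = 0
    · subst hA; exact lex_base hBne
    · have hAfin : A.toFinset.Nonempty := by
        rw [Multiset.toFinset_nonempty]; exact hA
      have hBfin : B.toFinset.Nonempty := by
        rw [Multiset.toFinset_nonempty]; exact hBne
      set mA := A.toFinset.max' hAfin with hmAdef
      set mB := B.toFinset.max' hBfin with hmBdef
      have hmAmem : mA ∈ A := Multiset.mem_toFinset.mp (A.toFinset.max'_mem hAfin)
      have hmBmem : mB ∈ B := Multiset.mem_toFinset.mp (B.toFinset.max'_mem hBfin)
      have hmAmax : ∀ a ∈ A, a ≤ mA := fun a ha =>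
        A.toFinset.le_max' a (Multiset.mem_toFinset.mpr ha)
      have hmBmax : ∀ a ∈ B, a ≤ mB := fun a ha =>
        B.toFinset.le_max' a (Multiset.mem_toFinset.mpr ha)
      have hcmB : c ≤ mB := hmBmax c hcB
      have hle : mA ≤ mB := by
        by_contra hlt
        push_neg at hlt
        have h1 : c < mA := lt_of_le_of_lt hcmB hlt
        have h2 : A.count mA = B.count mA := hhigh mA h1
        have h3 : mA ∈ B := Multiset.count_pos.mp (by
          rw [← h2]; exact Multiset.count_pos.mpr hmAmem)
        exact absurd (hmBmax mA h3) (not_le.mpr hlt)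
      rw [sd_cons A mA hmAmem hmAmax, sd_cons B mB hmBmem hmBmax]
      rcases lt_or_eq_of_le hle with hlt | heq
      · exact List.Lex.rel hlt
      · rw [heq] at hmAmem hmAmax ⊢
        apply List.Lex.cons
        have hcardA : (A.erase mB).card ≤ n := by
          have h2 := Multiset.card_erase_lt_of_mem hmAmem
          omega
        apply IH (A.erase mB) (B.erase mB) ?_ ?_ ?_
        · exact hcardA
        · intro d hd
          by_cases hdm : d = mB
          · subst hdm
            rw [Multiset.count_erase_self, Multiset.count_erase_self, hhigh mB hd]
          · rw [Multiset.count_erase_of_ne hdm, Multiset.count_erase_of_ne hdm]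
            exact hhigh d hd
        · by_cases hcm : c = mB
          · rw [hcm, Multiset.count_erase_self, Multiset.count_erase_self]
            have h1 : 1 ≤ A.count mB := Multiset.count_pos.mpr hmAmem
            rw [hcm] at hc
            omega
          · rw [Multiset.count_erase_of_ne hcm, Multiset.count_erase_of_ne hcm]
            exact hc



lemma lt_iff_lex (l1 l2 : List ℤ) : l1 < l2 ↔ List.Lex (· < ·) l1 l2 := Iff.rfl

lemma lexLE_iff (l1 l2 : List ℤ) : lexLE l1 l2 ↔ l1 ≤ l2 := by
  rw [lexLE, le_iff_lt_or_eq, lt_iff_lex]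
  tauto

variable {α : Type*} [DecidableEq α]

lemma map_move_notmem (z : α → ℤ) (s t : α) (R : Finset α) (hs : s ∉ R) (ht : t ∉ R) :
    R.val.map (move z s t) = R.val.map z := by
  apply Multiset.map_congr rfl
  intro x hx
  have hx' : x ∈ R := hx
  have hxs : x ≠ s := fun h => hs (h ▸ hx')
  have hxt : x ≠ t := fun h => ht (h ▸ hx')
  simp [move, hxs, hxt]

lemma val_decomp (T : Finset α) (s t : α) (hs : s ∈ T) (ht : t ∈ T) (hst : s ≠ t) :
    T.val = s ::ₘ t ::ₘ ((T.erase s).erase t).val := by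
  have hs' : s ∈ T.val := hs
  have ht' : t ∈ T.val.erase s := (Multiset.mem_erase_of_ne (fun h => hst h.symm)).mpr ht
  conv_lhs => rw [← Multiset.cons_erase hs', ← Multiset.cons_erase ht']
  simp [Finset.erase_val]

lemma sd_move_lt (T : Finset α) (z : α → ℤ) (s t : α) (hs : s ∈ T) (ht : t ∈ T)
    (h2 : z s + 2 ≤ z t) :
    List.Lex (· < ·) (sd (T.val.map (move z s t))) (sd (T.val.map z)) := by
  have hst : s ≠ t := by intro h; rw [h] at h2; omega
  have hd := val_decomp T s t hs ht hst
  set R := (T.erase s).erase t with hR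
  have hsR : s ∉ R := by simp [hR, Finset.mem_erase]
  have htR : t ∉ R := by simp [hR, Finset.mem_erase]
  have hmap : R.val.map (move z s t) = R.val.map z := map_move_notmem z s t R hsR htR
  have hms : move z s t s = z s + 1 := by simp [move, hst]
  have hmt : move z s t t = z t - 1 := by
    have : t ≠ s := fun h => hst h.symm
    simp [move, this]
  apply lex_of_count (z t) ((T.val.map (move z s t)).card) _ _ le_rfl
  · intro d hdgt
    rw [hd]
    simp only [Multiset.map_cons, hmap, hms, hmt, Multiset.count_cons]
    have e1 : d ≠ z s + 1 := by omega
    have e2 : d ≠ z t - 1 := by omega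
    have e3 : d ≠ z s := by omega
    have e4 : d ≠ z t := by omega
    simp [e1, e2, e3, e4]
  · rw [hd]
    simp only [Multiset.map_cons, hmap, hms, hmt, Multiset.count_cons]
    have e1 : z t ≠ z s + 1 := by omega
    have e2 : z t ≠ z t - 1 := by omega
    have e3 : z t ≠ z s := by omega
    simp [e1, e2, e3]

lemma map_move_perm (T : Finset α) (z : α → ℤ) (s t : α) (hs : s ∈ T) (ht : t ∈ T)
    (hst : s ≠ t) (h : z t = z s + 1) :
    T.val.map (move z s t) = T.val.map z := by
  have hd := val_decomp T s t hs ht hst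
  set R := (T.erase s).erase t with hR
  have hsR : s ∉ R := by simp [hR, Finset.mem_erase]
  have htR : t ∉ R := by simp [hR, Finset.mem_erase]
  have hmap : R.val.map (move z s t) = R.val.map z := map_move_notmem z s t R hsR htR
  have hms : move z s t s = z s + 1 := by simp [move, hst]
  have hmt : move z s t t = z t - 1 := by
    have : t ≠ s := fun h => hst h.symm
    simp [move, this]
  rw [hd]
  simp only [Multiset.map_cons, hmap, hms, hmt]
  rw [h]
  simp only [add_sub_cancel_right]
  exact Multiset.cons_swap _ _ _

lemma sum_move (X : Finset α) (z : α → ℤ) (s t : α) :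
    ∑ u ∈ X, move z s t u =
      ∑ u ∈ X, z u + (if s ∈ X then 1 else 0) - (if t ∈ X then 1 else 0) := by
  simp only [move, Finset.sum_sub_distrib, Finset.sum_add_distrib]
  congr 1
  · congr 1
    simp [Finset.sum_ite_eq']
  · simp [Finset.sum_ite_eq']

section Body

def zE (n : ℤ) : EReal := ((n : ℝ) : EReal)

lemma zE_le {m k : ℤ} : zE m ≤ zE k ↔ m ≤ k := by
  rw [zE, zE, EReal.coe_le_coe_iff]; exact_mod_cast Iff.rfl

lemma zE_eq {m k : ℤ} : zE m = zE k ↔ m = k := by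
  rw [zE, zE, EReal.coe_eq_coe_iff]; exact_mod_cast Iff.rfl

lemma zE_lt {m k : ℤ} : zE m < zE k ↔ m < k := by
  rw [zE, zE, EReal.coe_lt_coe_iff]; exact_mod_cast Iff.rfl

lemma zE_add (m k : ℤ) : zE (m + k) = zE m + zE k := by
  rw [zE, zE, zE, ← EReal.coe_add]
  norm_cast

lemma zE_ne_bot (m : ℤ) : zE m ≠ ⊥ := EReal.coe_ne_bot _

lemma zE_zero : zE 0 = 0 := by rw [zE]; norm_cast

def Memb (T : Finset α) (q : Finset α → EReal) (u : α → ℤ) : Prop :=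
  zE (∑ s ∈ T, u s) = q T ∧ ∀ X : Finset α, X ⊆ T → q X ≤ zE (∑ s ∈ X, u s)

def Tight (q : Finset α → EReal) (u : α → ℤ) (X : Finset α) : Prop :=
  q X = zE (∑ s ∈ X, u s)

variable {T : Finset α} {q : Finset α → EReal}

lemma tight_empty (hq0 : q ∅ = 0) (u : α → ℤ) : Tight q u ∅ := by
  rw [Tight, Finset.sum_empty, zE_zero, hq0]

lemma tight_top {u : α → ℤ} (hu : Memb T q u) : Tight q u T := hu.1.symm

lemma tight_inter_union
    (hqsup : ∀ X Y : Finset α, X ⊆ T → Y ⊆ T → q X + q Y ≤ q (X ∩ Y) + q (X ∪ Y))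
    (hqint : ∀ X : Finset α, X ⊆ T → q X = ⊥ ∨ ∃ n : ℤ, q X = zE n)
    {u : α → ℤ} (hu : Memb T q u) {X Y : Finset α} (hX : X ⊆ T) (hY : Y ⊆ T)
    (htX : Tight q u X) (htY : Tight q u Y) :
    Tight q u (X ∩ Y) ∧ Tight q u (X ∪ Y) := by
  have hXiY : X ∩ Y ⊆ T := fun a ha => hX (Finset.mem_of_mem_inter_left ha)
  have hXuY : X ∪ Y ⊆ T := Finset.union_subset hX hY
  set A := ∑ s ∈ X ∩ Y, u s with hA
  set B := ∑ s ∈ X ∪ Y, u s with hB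
  have h1 : q (X ∩ Y) ≤ zE A := hu.2 _ hXiY
  have h2 : q (X ∪ Y) ≤ zE B := hu.2 _ hXuY
  have hmod : (∑ s ∈ X, u s) + (∑ s ∈ Y, u s) = A + B := by
    rw [hA, hB, add_comm A B]
    exact (Finset.sum_union_inter).symm
  have hsum : q X + q Y = zE A + zE B := by
    rw [htX, htY, ← zE_add, hmod, zE_add]
  have hchain : zE A + zE B ≤ q (X ∩ Y) + q (X ∪ Y) := by
    rw [← hsum]; exact hqsup X Y hX hY
  rcases hqint (X ∩ Y) hXiY with hbot | ⟨m1, hm1⟩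
  · exfalso
    rw [hbot, EReal.bot_add] at hchain
    exact (zE_ne_bot _) (le_bot_iff.mp (by rw [← zE_add] at hchain; exact hchain))
  rcases hqint (X ∪ Y) hXuY with hbot | ⟨m2, hm2⟩
  · exfalso
    rw [hbot, EReal.add_bot] at hchain
    exact (zE_ne_bot _) (le_bot_iff.mp (by rw [← zE_add] at hchain; exact hchain))
  rw [hm1] at hchain h1
  rw [hm2] at hchain h2
  rw [← zE_add, ← zE_add] at hchain
  have hc : A + B ≤ m1 + m2 := zE_le.mp hchain
  have hm1' : m1 ≤ A := zE_le.mp h1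
  have hm2' : m2 ≤ B := zE_le.mp h2
  constructor
  · rw [Tight, hm1, ← hA, zE_eq]; omega
  · rw [Tight, hm2, ← hB, zE_eq]; omega

lemma tight_sup_family (hq0 : q ∅ = 0)
    (hqsup : ∀ X Y : Finset α, X ⊆ T → Y ⊆ T → q X + q Y ≤ q (X ∩ Y) + q (X ∪ Y))
    (hqint : ∀ X : Finset α, X ⊆ T → q X = ⊥ ∨ ∃ n : ℤ, q X = zE n)
    {u : α → ℤ} (hu : Memb T q u) (F : Finset (Finset α))
    (hF : ∀ Z ∈ F, Z ⊆ T ∧ Tight q u Z) :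
    (F.sup id ⊆ T) ∧ Tight q u (F.sup id) := by
  induction F using Finset.induction_on with
  | empty =>
    constructor
    · simp
    · rw [Finset.sup_empty]
      exact tight_empty hq0 u
  | insert a F ha IH =>
    rw [Finset.sup_insert]
    have hFa := hF a (Finset.mem_insert_self a F)
    have hIH := IH (fun Z hZ => hF Z (Finset.mem_insert_of_mem hZ))
    have := tight_inter_union hqsup hqint hu hFa.1 hIH.1 hFa.2 hIH.2
    exact ⟨Finset.union_subset hFa.1 hIH.1, this.2⟩

lemma tight_inf_family
    (hqsup : ∀ X Y : Finset α, X ⊆ T → Y ⊆ T → q X + q Y ≤ q (X ∩ Y) + q (X ∪ Y))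
    (hqint : ∀ X : Finset α, X ⊆ T → q X = ⊥ ∨ ∃ n : ℤ, q X = zE n)
    {u : α → ℤ} (hu : Memb T q u) (F : Finset (Finset α))
    (hF : ∀ Z ∈ F, Z ⊆ T ∧ Tight q u Z) :
    ∀ (hne : F.Nonempty), (F.inf' hne id ⊆ T) ∧ Tight q u (F.inf' hne id) := by
  induction F using Finset.induction_on with
  | empty => intro hne; exact absurd hne (by simp)
  | insert a F ha IH =>
    intro hne
    have hFa := hF a (Finset.mem_insert_self a F)
    rcases Finset.eq_empty_or_nonempty F with hFe | hFne
    · subst hFe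
      simpa using hFa
    · have hIH := IH (fun Z hZ => hF Z (Finset.mem_insert_of_mem hZ)) hFne
      rw [Finset.inf'_insert hFne]
      have := tight_inter_union hqsup hqint hu hFa.1 hIH.1 hFa.2 hIH.2
      exact ⟨fun x hx => hFa.1 (Finset.mem_of_mem_inter_left hx), this.1⟩

lemma move_mem
    (hqint : ∀ X : Finset α, X ⊆ T → q X = ⊥ ∨ ∃ n : ℤ, q X = zE n)
    {u : α → ℤ} (hu : Memb T q u) {s t : α} (hs : s ∈ T) (ht : t ∈ T) (hst : s ≠ t)
    (hblock : ∀ Z : Finset α, Z ⊆ T → Tight q u Z → t ∈ Z → s ∈ Z) :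
    Memb T q (move u s t) := by
  constructor
  · rw [sum_move, if_pos hs, if_pos ht, add_sub_cancel_right]
    exact hu.1
  · intro X hX
    rw [sum_move]
    by_cases htX : t ∈ X
    · by_cases hsX : s ∈ X
      · rw [if_pos hsX, if_pos htX, add_sub_cancel_right]
        exact hu.2 X hX
      · rw [if_neg hsX, if_pos htX, add_zero]
        have hnt : ¬ Tight q u X := fun h => hsX (hblock X hX h htX)
        rcases hqint X hX with hbot | ⟨n, hn⟩
        · rw [hbot]; exact bot_le
        · rw [hn, zE_le]
          have h1 : n ≤ ∑ x ∈ X, u x := zE_le.mp (by rw [← hn]; exact hu.2 X hX)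
          have h2 : n ≠ ∑ x ∈ X, u x := fun h => hnt (by rw [Tight, hn, zE_eq]; exact h)
          omega
    · rw [if_neg htX, sub_zero]
      refine le_trans (hu.2 X hX) (zE_le.mpr ?_)
      by_cases hsX : s ∈ X <;> simp [hsX]

lemma exists_gt {A : Finset α} {u v : α → ℤ} {t : α} (ht : t ∈ A)
    (hsum : ∑ x ∈ A, v x ≤ ∑ x ∈ A, u x) (hlt : u t < v t) :
    ∃ s ∈ A, s ≠ t ∧ v s < u s := by
  by_contra hcon
  push_neg at hcon
  have h1 : ∑ x ∈ A.erase t, u x ≤ ∑ x ∈ A.erase t, v x := by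
    apply Finset.sum_le_sum
    intro i hi
    exact hcon i (Finset.mem_of_mem_erase hi) (Finset.ne_of_mem_erase hi)
  have h2 : u t + ∑ x ∈ A.erase t, u x = ∑ x ∈ A, u x := Finset.add_sum_erase A u ht
  have h3 : v t + ∑ x ∈ A.erase t, v x = ∑ x ∈ A, v x := Finset.add_sum_erase A v ht
  omega

lemma sym_exchange (hq0 : q ∅ = 0)
    (hqsup : ∀ X Y : Finset α, X ⊆ T → Y ⊆ T → q X + q Y ≤ q (X ∩ Y) + q (X ∪ Y))
    (hqint : ∀ X : Finset α, X ⊆ T → q X = ⊥ ∨ ∃ n : ℤ, q X = zE n)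
    {u v : α → ℤ} (hu : Memb T q u) (hv : Memb T q v)
    {t : α} (ht : t ∈ T) (hlt : u t < v t) :
    ∃ s ∈ T, s ≠ t ∧ v s < u s ∧ Memb T q (move u t s) ∧ Memb T q (move v s t) := by
  classical
  -- W : union of u-tight sets avoiding t
  set FW := T.powerset.filter (fun Z => Tight q u Z ∧ t ∉ Z) with hFW
  have hFWprop : ∀ Z ∈ FW, Z ⊆ T ∧ Tight q u Z := by
    intro Z hZ
    rw [hFW, Finset.mem_filter, Finset.mem_powerset] at hZ
    exact ⟨hZ.1, hZ.2.1⟩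
  set W := FW.sup id with hW
  obtain ⟨hWT, hWtight⟩ := tight_sup_family hq0 hqsup hqint hu FW hFWprop
  have htW : t ∉ W := by
    intro hmem
    rw [hW, Finset.mem_sup] at hmem
    obtain ⟨Z, hZ, htZ⟩ := hmem
    rw [hFW, Finset.mem_filter] at hZ
    exact hZ.2.2 htZ
  have hWmax : ∀ Z : Finset α, Z ⊆ T → Tight q u Z → t ∉ Z → Z ⊆ W := by
    intro Z h1 h2 h3
    have : Z ∈ FW := by
      rw [hFW, Finset.mem_filter, Finset.mem_powerset]; exact ⟨h1, h2, h3⟩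
    exact Finset.le_sup (f := id) this
  -- T₀ : minimal v-tight set containing t
  set FT := T.powerset.filter (fun Z => Tight q v Z ∧ t ∈ Z) with hFT
  have hFTprop : ∀ Z ∈ FT, Z ⊆ T ∧ Tight q v Z := by
    intro Z hZ
    rw [hFT, Finset.mem_filter, Finset.mem_powerset] at hZ
    exact ⟨hZ.1, hZ.2.1⟩
  have hTmem : T ∈ FT := by
    rw [hFT, Finset.mem_filter, Finset.mem_powerset]
    exact ⟨Finset.Subset.refl T, tight_top hv, ht⟩
  have hne : FT.Nonempty := ⟨T, hTmem⟩
  set T₀ := FT.inf' hne id with hT₀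
  obtain ⟨hT₀T, hT₀tight⟩ := tight_inf_family hqsup hqint hv FT hFTprop hne
  have htT₀ : t ∈ T₀ := by
    have hle : ({t} : Finset α) ≤ FT.inf' hne id := by
      apply Finset.le_inf' hne id
      intro Z hZ
      rw [hFT, Finset.mem_filter] at hZ
      exact Finset.singleton_subset_iff.mpr hZ.2.2
    rw [hT₀]
    exact Finset.singleton_subset_iff.mp hle
  have hT₀min : ∀ Z : Finset α, Z ⊆ T → Tight q v Z → t ∈ Z → T₀ ⊆ Z := by
    intro Z h1 h2 h3
    have : Z ∈ FT := by
      rw [hFT, Finset.mem_filter, Finset.mem_powerset]; exact ⟨h1, h2, h3⟩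
    exact Finset.inf'_le id this
  -- counting
  set nW := ∑ s ∈ W, u s with hnW
  set nT0 := ∑ s ∈ T₀, v s with hnT0
  have hqW : q W = zE nW := hWtight
  have hqT0 : q T₀ = zE nT0 := hT₀tight
  have hchain := hqsup T₀ W hT₀T hWT
  rw [hqW, hqT0, ← zE_add] at hchain
  have h1 : q (T₀ ∩ W) ≤ zE (∑ s ∈ T₀ ∩ W, v s) :=
    hv.2 _ (fun a ha => hT₀T (Finset.mem_of_mem_inter_left ha))
  have h2 : q (T₀ ∪ W) ≤ zE (∑ s ∈ T₀ ∪ W, u s) := hu.2 _ (Finset.union_subset hT₀T hWT)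
  rcases hqint (T₀ ∩ W) (fun a ha => hT₀T (Finset.mem_of_mem_inter_left ha)) with hbot | ⟨m1, hm1⟩
  · exfalso
    rw [hbot, EReal.bot_add] at hchain
    exact (zE_ne_bot _) (le_bot_iff.mp hchain)
  rcases hqint (T₀ ∪ W) (Finset.union_subset hT₀T hWT) with hbot | ⟨m2, hm2⟩
  · exfalso
    rw [hbot, EReal.add_bot] at hchain
    exact (zE_ne_bot _) (le_bot_iff.mp hchain)
  rw [hm1] at hchain h1
  rw [hm2] at hchain h2
  rw [← zE_add] at hchain
  have hc : nT0 + nW ≤ m1 + m2 := zE_le.mp hchain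
  have hm1' : m1 ≤ ∑ s ∈ T₀ ∩ W, v s := zE_le.mp h1
  have hm2' : m2 ≤ ∑ s ∈ T₀ ∪ W, u s := zE_le.mp h2
  -- sums over T₀ \ W
  have hd1 : ∑ x ∈ (T₀ ∪ W) \ W, u x + ∑ x ∈ W, u x = ∑ x ∈ T₀ ∪ W, u x :=
    Finset.sum_sdiff Finset.subset_union_right
  have hd2 : ∑ x ∈ T₀ \ (T₀ ∩ W), v x + ∑ x ∈ T₀ ∩ W, v x = ∑ x ∈ T₀, v x :=
    Finset.sum_sdiff Finset.inter_subset_left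
  have he1 : (T₀ ∪ W) \ W = T₀ \ W := Finset.union_sdiff_right T₀ W
  have he2 : T₀ \ (T₀ ∩ W) = T₀ \ W := Finset.sdiff_inter_self_left T₀ W
  rw [he1] at hd1
  rw [he2] at hd2
  have hsums : ∑ x ∈ T₀ \ W, v x ≤ ∑ x ∈ T₀ \ W, u x := by omega
  have htmem : t ∈ T₀ \ W := Finset.mem_sdiff.mpr ⟨htT₀, htW⟩
  obtain ⟨s, hsmem, hsne, hsv⟩ := exists_gt htmem hsums hlt
  rw [Finset.mem_sdiff] at hsmem
  have hsT : s ∈ T := hT₀T hsmem.1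
  refine ⟨s, hsT, hsne, hsv, ?_, ?_⟩
  · -- u-move : move u t s; blocking sets are u-tight Z with s ∈ Z, t ∉ Z
    apply move_mem hqint hu ht hsT (fun h => hsne h.symm)
    intro Z hZT hZtight hsZ
    by_contra htZ
    exact hsmem.2 (hWmax Z hZT hZtight htZ hsZ)
  · -- v-move : move v s t
    apply move_mem hqint hv hsT ht hsne
    intro Z hZT hZtight htZ
    exact hT₀min Z hZT hZtight htZ hsmem.1

lemma exists_le {A : Finset α} {u : α → ℤ} {t : α} {a : ℤ} (ht : t ∈ A)
    (hsum : ∑ x ∈ A, u x ≤ (a + 1) * A.card) (hta : a + 2 ≤ u t) :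
    ∃ s ∈ A, s ≠ t ∧ u s ≤ a := by
  by_contra hcon
  push_neg at hcon
  have h1 : ∀ x ∈ A.erase t, a + 1 ≤ u x := by
    intro x hx
    have := hcon x (Finset.mem_of_mem_erase hx) (Finset.ne_of_mem_erase hx)
    omega
  have h2 : (A.erase t).card • (a + 1) ≤ ∑ x ∈ A.erase t, u x :=
    Finset.card_nsmul_le_sum _ _ _ h1
  rw [nsmul_eq_mul] at h2
  have h3 : u t + ∑ x ∈ A.erase t, u x = ∑ x ∈ A, u x := Finset.add_sum_erase A u ht
  have h4 : (A.erase t).card = A.card - 1 := Finset.card_erase_of_mem ht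
  have h5 : 1 ≤ A.card := Finset.card_pos.mpr ⟨t, ht⟩
  have h6 : ((A.erase t).card : ℤ) = (A.card : ℤ) - 1 := by rw [h4]; omega
  rw [h6] at h2
  nlinarith [h2, h3, hsum, hta]

lemma down_move (hq0 : q ∅ = 0)
    (hqsup : ∀ X Y : Finset α, X ⊆ T → Y ⊆ T → q X + q Y ≤ q (X ∩ Y) + q (X ∪ Y))
    (hqint : ∀ X : Finset α, X ⊆ T → q X = ⊥ ∨ ∃ n : ℤ, q X = zE n)
    {u : α → ℤ} (hu : Memb T q u) {t : α} (ht : t ∈ T) {a : ℤ}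
    (hbound : ∀ X : Finset α, X ⊆ T → q X ≤ zE ((a + 1) * X.card))
    (hta : a + 2 ≤ u t) :
    ∃ s ∈ T, s ≠ t ∧ u s ≤ a ∧ Memb T q (move u s t) := by
  classical
  set FT := T.powerset.filter (fun Z => Tight q u Z ∧ t ∈ Z) with hFT
  have hFTprop : ∀ Z ∈ FT, Z ⊆ T ∧ Tight q u Z := by
    intro Z hZ
    rw [hFT, Finset.mem_filter, Finset.mem_powerset] at hZ
    exact ⟨hZ.1, hZ.2.1⟩
  have hTmem : T ∈ FT := by
    rw [hFT, Finset.mem_filter, Finset.mem_powerset]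
    exact ⟨Finset.Subset.refl T, tight_top hu, ht⟩
  have hne : FT.Nonempty := ⟨T, hTmem⟩
  set T₀ := FT.inf' hne id with hT₀
  obtain ⟨hT₀T, hT₀tight⟩ := tight_inf_family hqsup hqint hu FT hFTprop hne
  have htT₀ : t ∈ T₀ := by
    have hle : ({t} : Finset α) ≤ FT.inf' hne id := by
      apply Finset.le_inf' hne id
      intro Z hZ
      rw [hFT, Finset.mem_filter] at hZ
      exact Finset.singleton_subset_iff.mpr hZ.2.2
    rw [hT₀]
    exact Finset.singleton_subset_iff.mp hle
  have hT₀min : ∀ Z : Finset α, Z ⊆ T → Tight q u Z → t ∈ Z → T₀ ⊆ Z := by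
    intro Z h1 h2 h3
    have : Z ∈ FT := by
      rw [hFT, Finset.mem_filter, Finset.mem_powerset]; exact ⟨h1, h2, h3⟩
    exact Finset.inf'_le id this
  have hsum : ∑ x ∈ T₀, u x ≤ (a + 1) * T₀.card := by
    have hb := hbound T₀ hT₀T
    rw [hT₀tight] at hb
    exact zE_le.mp hb
  obtain ⟨s, hsmem, hsne, hsa⟩ := exists_le htT₀ hsum hta
  refine ⟨s, hT₀T hsmem, hsne, hsa, ?_⟩
  apply move_mem hqint hu (hT₀T hsmem) ht (fun h => hsne h)
  intro Z hZT hZtight htZ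
  exact hT₀min Z hZT hZtight htZ hsmem

lemma zE_sub (m k : ℤ) : zE m - zE k = zE (m - k) := by
  rw [zE, zE, zE, ← EReal.coe_sub]
  norm_cast

lemma sub_le_int {E : EReal} (c m : ℤ) : E - zE c ≤ zE m ↔ E ≤ zE (m + c) := by
  rw [EReal.sub_le_iff_le_add (Or.inl (zE_ne_bot c)) (Or.inl (EReal.coe_ne_top _)), ← zE_add]

lemma add_le_add_int {E₁ E₂ : EReal} {a₁ a₂ b₁ b₂ : ℤ} (h : zE a₁ + zE a₂ ≤ E₁ + E₂)
    (h1 : E₁ ≤ zE b₁) (h2 : E₂ ≤ zE b₂) : a₁ + a₂ ≤ b₁ + b₂ := by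
  have hh := le_trans h (add_le_add h1 h2)
  rw [← zE_add, ← zE_add] at hh
  exact zE_le.mp hh

end Body

end GroeAux

open GroeAux

/-- Correctness of (one recursive step of) the Groenevelt-type decomposition
algorithm: with `a = ⌊p(S)/|S|⌋`, `x = a·χ_S + χ_U` (`|U| = k = p(S) − a|S|`),
`x ∉ B ∩ ℤ^S`, `y` a minimal integral element of `Q` above `x`, `S₊` the largest
`y`-tight set and `S₋ = S − S₊`, if `z` restricted to `S₊` is dec-min in the
restriction and `z` restricted to `S₋` is dec-min in the contraction, then
`z(s) ≥ a` on `S₊`, `z(s) ≤ a+1` on `S₋`, `z` satisfies the exchange condition,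
and hence `z` is a dec-min element of `B ∩ ℤ^S`. -/
theorem groenevelt_step_output_decmin [Nonempty α] (p : Finset α → EReal) (hp0 : p ∅ = 0)
    (hsup : Supermodular p) (hint : IntegerValued p)
    (pS : ℤ) (hpS : p (Finset.univ : Finset α) = ((pS : ℝ) : EReal))
    (a : ℤ) (ha1 : a * (Fintype.card α : ℤ) ≤ pS)
    (ha2 : pS < (a + 1) * (Fintype.card α : ℤ))
    (U : Finset α) (hU : (U.card : ℤ) = pS - a * (Fintype.card α : ℤ))
    (x : α → ℤ) (hxdef : x = fun s => a + (if s ∈ U then 1 else 0))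
    (hxB : ¬ memBZ p x)
    (y : α → ℤ)
    (hyQ : ∀ X : Finset α, p X ≤ ((((∑ s ∈ X, y s : ℤ) : ℝ)) : EReal))
    (hyx : ∀ s, x s ≤ y s)
    (hymin : ∀ y' : α → ℤ,
      (∀ X : Finset α, p X ≤ ((((∑ s ∈ X, y' s : ℤ) : ℝ)) : EReal)) →
      (∀ s, x s ≤ y' s) → (∀ s, y' s ≤ y s) → y' = y)
    (Splus : Finset α)
    (htight : p Splus = ((((∑ s ∈ Splus, y s : ℤ) : ℝ)) : EReal))
    (hlargest : ∀ X : Finset α,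
      p X = ((((∑ s ∈ X, y s : ℤ) : ℝ)) : EReal) → X ⊆ Splus)
    (z : α → ℤ)
    (hzplus : memRestrict p Splus z ∧ ∀ w : α → ℤ, memRestrict p Splus w →
      lexLE (sortDescOn Splus z) (sortDescOn Splus w))
    (hzminus : memContract p Splus z ∧ ∀ w : α → ℤ, memContract p Splus w →
      lexLE (sortDescOn (Finset.univ \ Splus) z) (sortDescOn (Finset.univ \ Splus) w)) :
    (∀ s ∈ Splus, a ≤ z s) ∧
    (∀ s ∈ Finset.univ \ Splus, z s ≤ a + 1) ∧
    (∀ s t : α, z s + 2 ≤ z t → ¬ memBZ p (move z s t)) ∧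
    DecMinZ p z := by
  classical
  have hpS' : p (Finset.univ : Finset α) = zE pS := hpS
  have hUnionEq : (Finset.univ \ Splus) ∪ Splus = Finset.univ :=
    Finset.sdiff_union_of_subset (Finset.subset_univ _)
  have htight' : p Splus = zE (∑ s ∈ Splus, y s) := htight
  have hcz : p Splus = zE (∑ s ∈ Splus, z s) := hzplus.1.1.symm
  have hqsupP : ∀ X Y : Finset α, X ⊆ Splus → Y ⊆ Splus → p X + p Y ≤ p (X ∩ Y) + p (X ∪ Y) :=
    fun X Y _ _ => hsup X Y
  have hqintP : ∀ X : Finset α, X ⊆ Splus → p X = ⊥ ∨ ∃ n : ℤ, p X = zE n :=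
    fun X _ => hint X
  have hxa : ∀ s, a ≤ x s := by intro s; rw [hxdef]; dsimp only; split <;> omega
  have hxa1 : ∀ s, x s ≤ a + 1 := by intro s; rw [hxdef]; dsimp only; split <;> omega
  have hya : ∀ s, a ≤ y s := fun s => le_trans (hxa s) (hyx s)
  have hyQ' : ∀ X : Finset α, p X ≤ zE (∑ s ∈ X, y s) := fun X => hyQ X
  -- y = x outside Splus
  have hyS : ∀ s, s ∉ Splus → y s = x s := by
    intro s hsS
    by_contra hne
    have hgt : x s < y s := lt_of_le_of_ne (hyx s) (fun h => hne h.symm)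
    set y' : α → ℤ := fun u => y u - (if u = s then 1 else 0) with hy'
    have hQ : ∀ X : Finset α, p X ≤ zE (∑ u ∈ X, y' u) := by
      intro X
      have hsum : ∑ u ∈ X, y' u = (∑ u ∈ X, y u) - (if s ∈ X then 1 else 0) := by
        rw [hy', Finset.sum_sub_distrib]
        congr 1
        simp [Finset.sum_ite_eq']
      by_cases hsX : s ∈ X
      · rw [hsum, if_pos hsX]
        have hnt : p X ≠ zE (∑ u ∈ X, y u) := fun h => hsS (hlargest X h hsX)
        rcases hint X with hb | ⟨m, hm⟩
        · rw [hb]; exact bot_le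
        · have hm' : p X = zE m := hm
          rw [hm']
          have h1 : m ≤ ∑ u ∈ X, y u := zE_le.mp (by rw [← hm']; exact hyQ' X)
          have h2 : m ≠ ∑ u ∈ X, y u := fun h => hnt (by rw [hm']; exact congrArg zE h)
          exact zE_le.mpr (by omega)
      · rw [hsum, if_neg hsX, sub_zero]; exact hyQ X
    have hge : ∀ u, x u ≤ y' u := by
      intro u; rw [hy']; dsimp only
      by_cases hu : u = s
      · subst hu; rw [if_pos rfl]; omega
      · rw [if_neg hu]; have := hyx u; omega
    have hle : ∀ u, y' u ≤ y u := by
      intro u; rw [hy']; dsimp only; split <;> omega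
    have heq := hymin y' hQ hge hle
    have h := congrFun heq s
    rw [hy'] at h; dsimp only at h; rw [if_pos rfl] at h; omega
  ---- Goal 1
  have hgoal1 : ∀ s ∈ Splus, a ≤ z s := by
    intro s₀ hs₀
    by_contra hltc
    push_neg at hltc
    have hyP : Memb Splus p y := ⟨htight'.symm, fun X _ => hyQ X⟩
    have hzP : Memb Splus p z := ⟨hzplus.1.1, hzplus.1.2⟩
    have hlty : z s₀ < y s₀ := lt_of_lt_of_le hltc (hya s₀)
    obtain ⟨s, hsT, hsne, hvs, hmove, -⟩ :=
      sym_exchange hp0 hqsupP hqintP hzP hyP hs₀ hlty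
    have h2 : z s₀ + 2 ≤ z s := by have := hya s; omega
    have hres : memRestrict p Splus (move z s₀ s) := ⟨hmove.1, hmove.2⟩
    have hlex := hzplus.2 _ hres
    have hL := sd_move_lt Splus z s₀ s hs₀ hsT h2
    exact absurd ((lexLE_iff _ _).mp hlex) (not_le.mpr ((lt_iff_lex _ _).mpr hL))
  ---- contraction body
  set qm : Finset α → EReal := fun X => p (X ∪ Splus) - p Splus with hqm
  have hq0m : qm ∅ = 0 := by
    show p (∅ ∪ Splus) - p Splus = 0
    rw [Finset.empty_union, htight', zE_sub, sub_self, zE_zero]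
  have hiU : ∀ X Y : Finset α, (X ∪ Splus) ∩ (Y ∪ Splus) = (X ∩ Y) ∪ Splus := by
    intro X Y; ext u; simp only [Finset.mem_inter, Finset.mem_union]; tauto
  have huU : ∀ X Y : Finset α, (X ∪ Splus) ∪ (Y ∪ Splus) = (X ∪ Y) ∪ Splus := by
    intro X Y; ext u; simp only [Finset.mem_union]; tauto
  have hnegsub : ∀ E : EReal, E - zE (∑ s ∈ Splus, y s) = E + zE (-(∑ s ∈ Splus, y s)) := by
    intro E
    rw [sub_eq_add_neg]
    congr 1
    rw [zE, zE, ← EReal.coe_neg]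
    norm_cast
  have hqsupm : ∀ X Y : Finset α, X ⊆ Finset.univ \ Splus → Y ⊆ Finset.univ \ Splus →
      qm X + qm Y ≤ qm (X ∩ Y) + qm (X ∪ Y) := by
    intro X Y _ _
    show (p (X ∪ Splus) - p Splus) + (p (Y ∪ Splus) - p Splus) ≤
      (p ((X ∩ Y) ∪ Splus) - p Splus) + (p ((X ∪ Y) ∪ Splus) - p Splus)
    have hs := hsup (X ∪ Splus) (Y ∪ Splus)
    rw [hiU X Y, huU X Y] at hs
    rw [htight', hnegsub, hnegsub, hnegsub, hnegsub]
    calc (p (X ∪ Splus) + zE (-(∑ s ∈ Splus, y s))) + (p (Y ∪ Splus) + zE (-(∑ s ∈ Splus, y s)))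
        = (p (X ∪ Splus) + p (Y ∪ Splus)) +
            (zE (-(∑ s ∈ Splus, y s)) + zE (-(∑ s ∈ Splus, y s))) := add_add_add_comm _ _ _ _
      _ ≤ (p ((X ∩ Y) ∪ Splus) + p ((X ∪ Y) ∪ Splus)) +
            (zE (-(∑ s ∈ Splus, y s)) + zE (-(∑ s ∈ Splus, y s))) := add_le_add hs le_rfl
      _ = (p ((X ∩ Y) ∪ Splus) + zE (-(∑ s ∈ Splus, y s))) +
            (p ((X ∪ Y) ∪ Splus) + zE (-(∑ s ∈ Splus, y s))) := (add_add_add_comm _ _ _ _).symm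
  have hqintm : ∀ X : Finset α, X ⊆ Finset.univ \ Splus → qm X = ⊥ ∨ ∃ n : ℤ, qm X = zE n := by
    intro X _
    rcases hint (X ∪ Splus) with hb | ⟨m, hm⟩
    · left; show p (X ∪ Splus) - p Splus = ⊥; rw [hb]; exact EReal.bot_sub _
    · right
      have hm' : p (X ∪ Splus) = zE m := hm
      exact ⟨m - (∑ s ∈ Splus, y s), by
        show p (X ∪ Splus) - p Splus = _
        rw [hm', htight', zE_sub]⟩
  have hzm : Memb (Finset.univ \ Splus) qm z := by
    refine ⟨?_, fun X hX => hzminus.1.2 X hX⟩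
    show zE _ = p ((Finset.univ \ Splus) ∪ Splus) - p Splus
    rw [hUnionEq]
    exact hzminus.1.1
  have toContract : ∀ w : α → ℤ, Memb (Finset.univ \ Splus) qm w → memContract p Splus w := by
    intro w hw
    refine ⟨?_, fun X hX => hw.2 X hX⟩
    have h : zE (∑ s ∈ Finset.univ \ Splus, w s) = p ((Finset.univ \ Splus) ∪ Splus) - p Splus :=
      hw.1
    rw [hUnionEq] at h
    exact h
  have hbound : ∀ X : Finset α, X ⊆ Finset.univ \ Splus → qm X ≤ zE ((a + 1) * X.card) := by
    intro X hX
    have hdisj : Disjoint X Splus := by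
      rw [Finset.disjoint_left]
      intro u hu
      exact (Finset.mem_sdiff.mp (hX hu)).2
    have hsumU : ∑ u ∈ X ∪ Splus, y u = (∑ u ∈ X, y u) + (∑ s ∈ Splus, y s) :=
      Finset.sum_union hdisj
    have h1 : p (X ∪ Splus) ≤ zE ((∑ u ∈ X, y u) + (∑ s ∈ Splus, y s)) := by
      rw [← hsumU]; exact hyQ _
    have h2 : ∑ u ∈ X, y u ≤ (a + 1) * X.card := by
      have hcong : ∑ u ∈ X, y u = ∑ u ∈ X, x u :=
        Finset.sum_congr rfl (fun u hu => hyS u (Finset.mem_sdiff.mp (hX hu)).2)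
      have h3 := Finset.sum_le_card_nsmul X x (a + 1) (fun u _ => hxa1 u)
      rw [nsmul_eq_mul] at h3
      rw [hcong]
      calc ∑ u ∈ X, x u ≤ (X.card : ℤ) * (a + 1) := h3
        _ = (a + 1) * X.card := mul_comm _ _
    show p (X ∪ Splus) - p Splus ≤ zE ((a + 1) * X.card)
    rw [htight']
    rw [sub_le_int]
    exact le_trans h1 (zE_le.mpr (by omega))
  ---- Goal 2
  have hgoal2 : ∀ t ∈ Finset.univ \ Splus, z t ≤ a + 1 := by
    intro t htm
    by_contra hgt
    push_neg at hgt
    obtain ⟨s, hsT, hsne, hsa, hmove⟩ :=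
      down_move hq0m hqsupm hqintm hzm htm hbound (by omega)
    have h2 : z s + 2 ≤ z t := by omega
    have hcon := hzminus.2 _ (toContract _ hmove)
    have hL := sd_move_lt (Finset.univ \ Splus) z s t hsT htm h2
    exact absurd ((lexLE_iff _ _).mp hcon) (not_le.mpr ((lt_iff_lex _ _).mpr hL))
  ---- Goal 3
  have hgoal3 : ∀ s t : α, z s + 2 ≤ z t → ¬ memBZ p (move z s t) := by
    intro s t h2 hmem
    have hst : s ≠ t := fun h => by rw [h] at h2; omega
    by_cases htS : t ∈ Splus
    · by_cases hsS : s ∈ Splus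
      · have hres : memRestrict p Splus (move z s t) := by
          refine ⟨?_, fun X _ => hmem.2 X⟩
          show zE _ = p Splus
          rw [sum_move, if_pos hsS, if_pos htS, add_sub_cancel_right]
          exact hzplus.1.1
        have hlex := hzplus.2 _ hres
        have hL := sd_move_lt Splus z s t hsS htS h2
        exact absurd ((lexLE_iff _ _).mp hlex) (not_le.mpr ((lt_iff_lex _ _).mpr hL))
      · have h := hmem.2 Splus
        have hsum : ∑ u ∈ Splus, move z s t u = (∑ s ∈ Splus, z s) - 1 := by
          rw [sum_move, if_neg hsS, if_pos htS]; omega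
        have h' : p Splus ≤ zE ((∑ s ∈ Splus, z s) - 1) := by rw [← hsum]; exact h
        rw [hcz] at h'
        have := zE_le.mp h'
        omega
    · by_cases hsS : s ∈ Splus
      · have h1 := hgoal1 s hsS
        have h2' := hgoal2 t (Finset.mem_sdiff.mpr ⟨Finset.mem_univ t, htS⟩)
        omega
      · have hsT : s ∈ Finset.univ \ Splus := Finset.mem_sdiff.mpr ⟨Finset.mem_univ s, hsS⟩
        have htT : t ∈ Finset.univ \ Splus := Finset.mem_sdiff.mpr ⟨Finset.mem_univ t, htS⟩
        have hcont : memContract p Splus (move z s t) := by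
          refine ⟨?_, ?_⟩
          · have hsum : ∑ u ∈ Finset.univ \ Splus, move z s t u =
                ∑ u ∈ Finset.univ \ Splus, z u := by
              rw [sum_move, if_pos hsT, if_pos htT]; omega
            show zE _ = p Finset.univ - p Splus
            rw [hsum]
            exact hzminus.1.1
          · intro X hX
            have h := hmem.2 (X ∪ Splus)
            have hdisj : Disjoint X Splus := by
              rw [Finset.disjoint_left]
              intro u hu
              exact (Finset.mem_sdiff.mp (hX hu)).2
            have hsum2 : ∑ u ∈ X ∪ Splus, move z s t u =
                (∑ u ∈ X, move z s t u) + (∑ s ∈ Splus, z s) := by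
              rw [Finset.sum_union hdisj]
              congr 1
              rw [sum_move, if_neg hsS, if_neg htS]; omega
            have h' : p (X ∪ Splus) ≤ zE ((∑ u ∈ X, move z s t u) + (∑ s ∈ Splus, z s)) := by
              rw [← hsum2]; exact h
            show p (X ∪ Splus) - p Splus ≤ zE (∑ u ∈ X, move z s t u)
            rw [hcz, sub_le_int]
            exact h'
        have hlex := hzminus.2 _ hcont
        have hL := sd_move_lt (Finset.univ \ Splus) z s t hsT htT h2
        exact absurd ((lexLE_iff _ _).mp hlex) (not_le.mpr ((lt_iff_lex _ _).mpr hL))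
  ---- membership of z in B
  have hsplitz : ∑ s ∈ Finset.univ \ Splus, z s + ∑ s ∈ Splus, z s = ∑ s, z s :=
    Finset.sum_sdiff (Finset.subset_univ _)
  have hsumTm : ∑ s ∈ Finset.univ \ Splus, z s = pS - (∑ s ∈ Splus, z s) := by
    have h := hzminus.1.1
    rw [hpS', hcz, zE_sub] at h
    exact zE_eq.mp h
  have hz1 : zE (∑ s, z s) = p Finset.univ := by
    rw [hpS', zE_eq]
    omega
  have hzB2 : ∀ Z : Finset α, p Z ≤ zE (∑ s ∈ Z, z s) := by
    intro Z
    rcases hint Z with hb | ⟨m, hm⟩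
    · rw [hb]; exact bot_le
    · have h1 : p (Z ∩ Splus) ≤ zE (∑ s ∈ Z ∩ Splus, z s) :=
        hzplus.1.2 _ Finset.inter_subset_right
      have hsub : Z \ Splus ⊆ Finset.univ \ Splus := by
        intro u hu
        rw [Finset.mem_sdiff] at hu ⊢
        exact ⟨Finset.mem_univ u, hu.2⟩
      have hzm2 : p ((Z \ Splus) ∪ Splus) - p Splus ≤ zE (∑ s ∈ Z \ Splus, z s) :=
        hzminus.1.2 (Z \ Splus) hsub
      rw [Finset.sdiff_union_self_eq_union] at hzm2
      rw [hcz, sub_le_int] at hzm2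
      have hm' : p Z = zE m := hm
      have hsupZ := hsup Z Splus
      rw [hm', hcz] at hsupZ
      have hcomb := add_le_add_int hsupZ h1 hzm2
      have hsplitZ : ∑ s ∈ Z \ (Z ∩ Splus), z s + ∑ s ∈ Z ∩ Splus, z s = ∑ s ∈ Z, z s :=
        Finset.sum_sdiff Finset.inter_subset_left
      rw [Finset.sdiff_inter_self_left] at hsplitZ
      rw [hm']
      exact zE_le.mpr (by omega)
  have hzB : memBZ p z := ⟨hz1, hzB2⟩
  ---- Goal 4 : dec-min
  have hmain : ∀ n : ℕ, ∀ w : α → ℤ, memBZ p w → (∑ s, (w s - z s).natAbs) = n →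
      lexLE (sortDescZ z) (sortDescZ w) := by
    intro n
    induction n using Nat.strong_induction_on with
    | _ n IH =>
    intro w hw hdist
    by_contra hcon
    have hwz : w ≠ z := by rintro rfl; exact hcon (Or.inl rfl)
    have hsumw : ∑ s, w s = pS := by
      have h := hw.1
      rw [hpS'] at h
      exact zE_eq.mp h
    have hsumz : ∑ s, z s = pS := by
      have h := hzB.1
      rw [hpS'] at h
      exact zE_eq.mp h
    have hex : ∃ t, w t < z t := by
      by_contra hno
      push_neg at hno
      have hne2 : ∃ t₀, z t₀ < w t₀ := by
        by_contra hh
        push_neg at hh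
        exact hwz (funext fun u => le_antisymm (hh u) (hno u))
      obtain ⟨t₀, ht₀⟩ := hne2
      have hlt : ∑ s, z s < ∑ s, w s :=
        Finset.sum_lt_sum (fun i _ => hno i) ⟨t₀, Finset.mem_univ _, ht₀⟩
      omega
    obtain ⟨t, htw⟩ := hex
    have hwM : Memb Finset.univ p w := ⟨hw.1, fun X _ => hw.2 X⟩
    have hzM : Memb Finset.univ p z := ⟨hzB.1, fun X _ => hzB.2 X⟩
    obtain ⟨s, -, hsne, hzs, hmw, hmz⟩ :=
      sym_exchange hp0 (fun X Y _ _ => hsup X Y) (fun X _ => hint X) hwM hzM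
        (Finset.mem_univ t) htw
    have hmzB : memBZ p (move z s t) := ⟨hmz.1, fun Z => hmz.2 Z (Finset.subset_univ Z)⟩
    have hzt : z t ≤ z s + 1 := by
      by_contra hgt
      push_neg at hgt
      exact hgoal3 s t (by omega) hmzB
    have hws : w t + 1 ≤ w s := by omega
    have hw'B : memBZ p (move w t s) := ⟨hmw.1, fun Z => hmw.2 Z (Finset.subset_univ Z)⟩
    -- distance decrease
    have hsne' : t ≠ s := fun h => hsne h.symm
    have hsplitg : ∀ g : α → ℕ,
        (∑ i, g i) = g t + (g s + ∑ i ∈ (Finset.univ.erase t).erase s, g i) := by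
      intro g
      have hsmem : s ∈ Finset.univ.erase t := Finset.mem_erase.mpr ⟨hsne, Finset.mem_univ s⟩
      rw [← Finset.add_sum_erase _ g (Finset.mem_univ t), ← Finset.add_sum_erase _ g hsmem]
    have hmt' : move w t s t = w t + 1 := by simp [move, hsne']
    have hms' : move w t s s = w s - 1 := by simp [move, hsne]
    have hoth : ∀ i, i ∈ (Finset.univ.erase t).erase s → move w t s i = w i := by
      intro i hi
      rw [Finset.mem_erase] at hi
      have hi2 := Finset.mem_erase.mp hi.2
      simp [move, hi.1, hi2.1]
    have hrest : ∑ i ∈ (Finset.univ.erase t).erase s, ((move w t s) i - z i).natAbs =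
        ∑ i ∈ (Finset.univ.erase t).erase s, (w i - z i).natAbs :=
      Finset.sum_congr rfl (fun i hi => by rw [hoth i hi])
    have hda := hsplitg (fun i => ((move w t s) i - z i).natAbs)
    have hdb := hsplitg (fun i => (w i - z i).natAbs)
    rw [hrest] at hda
    rw [hdb] at hdist
    have hdist' : (∑ i, ((move w t s) i - z i).natAbs) = n - 2 ∧ 2 ≤ n := by
      rw [hda, hmt', hms']
      constructor
      · omega
      · omega
    rcases lt_or_eq_of_le hws with hlt2 | heq2
    · have hL := sd_move_lt Finset.univ w t s (Finset.mem_univ t) (Finset.mem_univ s) (by omega)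
      have hIH := IH (n - 2) (by omega) (move w t s) hw'B hdist'.1
      exact hcon ((lexLE_iff _ _).mpr (le_trans ((lexLE_iff _ _).mp hIH)
        (le_of_lt ((lt_iff_lex _ _).mpr hL))))
    · have hperm : Finset.univ.val.map (move w t s) = Finset.univ.val.map w :=
        map_move_perm Finset.univ w t s (Finset.mem_univ t) (Finset.mem_univ s) hsne'
          heq2.symm
      have hsd : sortDescZ (move w t s) = sortDescZ w := by
        show sd (Finset.univ.val.map (move w t s)) = sd (Finset.univ.val.map w)
        rw [hperm]
      have hIH := IH (n - 2) (by omega) (move w t s) hw'B hdist'.1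
      rw [hsd] at hIH
      exact hcon hIH
  exact ⟨hgoal1, hgoal2, hgoal3, hzB,
    fun w hw => hmain (∑ s, (w s - z s).natAbs) w hw rfl⟩
end
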